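/- arXiv:1206.5863 — 9 statements merged into one kernel-verified Lean document; each statement's English description precedes it below -/
import Mathlib

section
/- If l ≤ c, then the set C of all words in F^l that differ from a fixed word w in exactly one coordinate has cardinality l(q-1) and is a c-frameproof code, where q = |F|. -/
open Finset

/-- The descendant set of a set of words. -/
def desc {l : ℕ} {F : Type*} (P : Set (Fin l → F)) : Set (Fin l → F) :=
  {x | ∀ i : Fin l, ∃ y ∈ P, x i = y i}

/-- `C` is a `c`-frameproof code of length `l`. -/
def IsFrameproof {l : ℕ} {F : Type*} (c : ℕ) (C : Set (Fin l → F)) : Prop :=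
  ∀ P : Finset (Fin l → F), ↑P ⊆ C → P.card ≤ c → desc ↑P ∩ C = ↑P

/-- Property P(t) with special element `inf`: each codeword has at most `t-1`
coordinates equal to `inf`, and distinct codewords cannot agree in `t`
coordinates all of whose values are not `inf`. -/
def PropertyP {l : ℕ} {S : Type*} [DecidableEq S] (t : ℕ) (inf : S)
    (C : Set (Fin l → S)) : Prop :=
  (∀ x ∈ C, (Finset.univ.filter fun i => x i = inf).card ≤ t - 1) ∧
  ∀ x ∈ C, ∀ y ∈ C, ∀ I : Finset (Fin l), t ≤ I.card →
    (∀ i ∈ I, x i = y i ∧ x i ≠ inf) → x = y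

/-- `A` is an orthogonal array of strength `t` and index 1:
in any `t` distinct rows, every `t`-tuple appears exactly once as a column. -/
def IsOA {l N : ℕ} {S : Type*} (t : ℕ) (A : Fin l → Fin N → S) : Prop :=
  ∀ rows : Fin t → Fin l, Function.Injective rows →
    ∀ v : Fin t → S, ∃! j : Fin N, ∀ k : Fin t, A (rows k) j = v k

lemma hamming_one_mem {l : ℕ} {F : Type*} [Fintype F] [DecidableEq F]
    (w x : Fin l → F) (hx : (Finset.univ.filter fun i => x i ≠ w i).card = 1) :
    ∃ i : Fin l, x i ≠ w i ∧ ∀ j, j ≠ i → x j = w j := by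
  obtain ⟨i, hi⟩ := Finset.card_eq_one.mp hx
  refine ⟨i, ?_, ?_⟩
  · have : i ∈ Finset.univ.filter fun i => x i ≠ w i := by rw [hi]; simp
    simpa using this
  · intro j hj
    by_contra h
    have : j ∈ Finset.univ.filter fun i => x i ≠ w i := by simp [h]
    rw [hi, Finset.mem_singleton] at this
    exact hj this

/-- If `l ≤ c`, the set of words differing from a fixed word `w` in exactly one
coordinate has cardinality `l * (q - 1)` and is `c`-frameproof. -/
theorem frameproof_hamming_one {l c q : ℕ} {F : Type*} [Fintype F] [DecidableEq F]
    (hq : Fintype.card F = q) (hq2 : 2 ≤ q) (hl : 1 ≤ l) (hlc : l ≤ c)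
    (w : Fin l → F) :
    Set.ncard {x : Fin l → F | (Finset.univ.filter fun i => x i ≠ w i).card = 1}
      = l * (q - 1) ∧
    IsFrameproof c {x : Fin l → F | (Finset.univ.filter fun i => x i ≠ w i).card = 1} := by
  set C : Set (Fin l → F) := {x : Fin l → F | (Finset.univ.filter fun i => x i ≠ w i).card = 1}
    with hC
  constructor
  · -- cardinality via bijection with Σ i, {a // a ≠ w i}
    have hg : ∀ (i : Fin l) (a : {a : F // a ≠ w i}), Function.update w i a.1 ∈ C := by
      intro i a
      have : (Finset.univ.filter fun j => Function.update w i a.1 j ≠ w j) = {i} := by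
        ext j
        simp only [Finset.mem_filter, Finset.mem_univ, true_and, Finset.mem_singleton]
        rcases eq_or_ne j i with rfl | h
        · simp [a.2]
        · simp [Function.update_of_ne h, h]
      simp only [hC, Set.mem_setOf_eq, this, Finset.card_singleton]
    let g : (Σ i : Fin l, {a : F // a ≠ w i}) → C := fun p => ⟨Function.update w p.1 p.2.1, hg p.1 p.2⟩
    have hbij : Function.Bijective g := by
      constructor
      · rintro ⟨i, a, ha⟩ ⟨i', a', ha'⟩ h
        have h' : Function.update w i a = Function.update w i' a' := congrArg Subtype.val h
        rcases eq_or_ne i i' with rfl | hii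
        · have : a = a' := by
            have := congrFun h' i; simpa using this
          simp [this]
        · exfalso
          have := congrFun h' i
          rw [Function.update_self, Function.update_of_ne hii] at this
          exact ha this
      · rintro ⟨x, hx⟩
        obtain ⟨i, hi, hother⟩ := hamming_one_mem w x hx
        refine ⟨⟨i, x i, hi⟩, ?_⟩
        apply Subtype.ext
        funext j
        rcases eq_or_ne j i with rfl | h
        · simp [g]
        · simp [g, Function.update_of_ne h, hother j h]
    have : Set.ncard C = Nat.card (Σ i : Fin l, {a : F // a ≠ w i}) := by
      rw [Set.ncard_eq_toFinset_card']
      rw [Nat.card_eq_of_bijective g hbij]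
      simp [Nat.card_eq_fintype_card, Set.toFinset_card]
    rw [this]
    have hcard : ∀ i : Fin l, Fintype.card {a : F // a ≠ w i} = q - 1 := by
      intro i
      rw [Fintype.card_subtype_compl]
      simp [hq]
    rw [Nat.card_eq_fintype_card, Fintype.card_sigma]
    simp [hcard, Finset.sum_const, mul_comm]
  · -- frameproof
    intro P hP _
    apply Set.Subset.antisymm
    · rintro x ⟨hdesc, hxC⟩
      obtain ⟨i, hi, hother⟩ := hamming_one_mem w x hxC
      obtain ⟨y, hyP, hxy⟩ := hdesc i
      obtain ⟨i', hi', hother'⟩ := hamming_one_mem w y (hP hyP)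
      have hii' : i = i' := by
        by_contra h
        exact hi (hxy.trans (hother' i (fun h' => h h')))
      have : x = y := by
        funext j
        rcases eq_or_ne j i with rfl | h
        · exact hxy
        · rw [hother j h, hother' j (hii' ▸ h)]
      rw [this]; exact hyP
    · intro x hx
      exact ⟨fun i => ⟨x, hx, rfl⟩, hP hx⟩
end

section
/- If any two distinct codewords of a code C ⊆ S^l agree in at most t-1 coordinates, and l > c(t-1), then C is a c-frameproof code. -/
open Finset

/-- If any two distinct codewords agree in at most `t-1` coordinates and
`l > c*(t-1)`, then the code is `c`-frameproof. -/
theorem frameproof_of_agreement {l t c : ℕ} {S : Type*} [DecidableEq S]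
    (C : Set (Fin l → S))
    (h : ∀ x ∈ C, ∀ y ∈ C, x ≠ y →
      (Finset.univ.filter fun i => x i = y i).card ≤ t - 1)
    (hlc : c * (t - 1) < l) : IsFrameproof c C := by
  intro P hPC hPc
  refine Set.Subset.antisymm (fun x hx => ?_) (fun x hx => ⟨fun i => ⟨x, hx, rfl⟩, hPC hx⟩)
  obtain ⟨hxd, hxC⟩ := hx
  by_contra hxP
  have hsub : (Finset.univ : Finset (Fin l)) ⊆
      P.biUnion (fun y => Finset.univ.filter fun i => x i = y i) := by
    intro i _
    obtain ⟨y, hy, hxy⟩ := hxd i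
    exact Finset.mem_biUnion.2 ⟨y, hy, Finset.mem_filter.2 ⟨Finset.mem_univ i, hxy⟩⟩
  have hcard := Finset.card_le_card hsub
  have hle : (P.biUnion (fun y => Finset.univ.filter fun i => x i = y i)).card
      ≤ P.card * (t - 1) := by
    calc _ ≤ ∑ y ∈ P, (Finset.univ.filter fun i => x i = y i).card :=
          Finset.card_biUnion_le
      _ ≤ ∑ _y ∈ P, (t - 1) := Finset.sum_le_sum fun y hy =>
          h x hxC y (hPC hy) (fun he => hxP (by simpa [he] using hy))
      _ = P.card * (t - 1) := by simp [Finset.sum_const, Nat.mul_comm]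
  have : l ≤ c * (t - 1) := by
    calc l = (Finset.univ : Finset (Fin l)).card := by simp
      _ ≤ _ := hcard
      _ ≤ P.card * (t - 1) := hle
      _ ≤ c * (t - 1) := Nat.mul_le_mul_right _ hPc
  exact absurd this (Nat.not_le.2 hlc)
end

section
/- Let C ⊆ S^l be an s-ary c-frameproof code of length l of cardinality M satisfying Property P(t) with special element ∞, where m is a prime power with m ≥ l-1, 2t-1 ≤ l, c ≥ t, and l = c(t-1)+r for some r with t ≤ r ≤ c. Then there exists a c-frameproof code of length l over an alphabet of size q = (s-1)m+1 with cardinality M·m^t. -/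
open Finset Polynomial

def rsCol {K : Type*} [Field K] {l t m : ℕ} (eK : Fin m → K) (v : Fin t → K) (i : Fin l) : K :=
  if h : (i : ℕ) < m then ∑ k : Fin t, v k * (eK ⟨i, h⟩) ^ (k : ℕ)
  else if ht : 0 < t then v ⟨t - 1, by omega⟩ else 0

lemma rsCol_agree {K : Type*} [Field K] [DecidableEq K] {l t m : ℕ}
    (eK : Fin m → K) (heK : Function.Injective eK) (hml : l - 1 ≤ m)
    {v w : Fin t → K} (hvw : v ≠ w) :
    (Finset.univ.filter fun i : Fin l => rsCol eK v i = rsCol eK w i).card ≤ t - 1 := by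
  classical
  have ht : 0 < t := by
    rcases Nat.eq_zero_or_pos t with h | h
    · subst h; exact absurd (Subsingleton.elim v w) hvw
    · exact h
  set D : Fin t → K := fun k => v k - w k with hD
  set P : K[X] := ∑ k : Fin t, C (D k) * X ^ (k : ℕ) with hPdef
  have hco : ∀ k : Fin t, P.coeff (k : ℕ) = D k := by
    intro k
    rw [hPdef, finset_sum_coeff]
    rw [Finset.sum_eq_single k]
    · simp
    · intro b _ hb
      have hbk : ¬ ((b : ℕ) = (k : ℕ)) := fun h => hb (Fin.ext h)
      have hkb : ¬ ((k : ℕ) = (b : ℕ)) := fun h => hb (Fin.ext h.symm)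
      simp [coeff_C_mul, coeff_X_pow, hbk, hkb]
    · simp
  have hP0 : P ≠ 0 := by
    obtain ⟨k, hk⟩ : ∃ k, v k ≠ w k := Function.ne_iff.mp hvw
    intro h
    have h2 := hco k
    rw [h] at h2
    simp only [coeff_zero] at h2
    exact hk (sub_eq_zero.mp (by rw [hD] at h2; exact h2.symm))
  have hdeg : P.natDegree ≤ t - 1 := by
    apply natDegree_sum_le_of_forall_le
    intro k _
    exact (natDegree_C_mul_X_pow_le _ _).trans (by omega)
  have heval : ∀ (i : Fin l) (h : (i : ℕ) < m),
      rsCol eK v i - rsCol eK w i = P.eval (eK ⟨i, h⟩) := by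
    intro i h
    rw [hPdef]
    simp only [eval_finset_sum, eval_mul, eval_C, eval_pow, eval_X, rsCol, dif_pos h, hD]
    rw [← Finset.sum_sub_distrib]
    congr 1; ext k; ring
  set A := Finset.univ.filter fun i : Fin l => rsCol eK v i = rsCol eK w i with hA
  set Af := A.filter fun i : Fin l => (i : ℕ) < m with hAf
  set f : Fin l → K := fun i => if h : (i : ℕ) < m then eK ⟨i, h⟩ else 0 with hf
  have hroot : ∀ i ∈ Af, f i ∈ P.roots.toFinset := by
    intro i hi
    obtain ⟨hiA, him⟩ := Finset.mem_filter.mp hi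
    have hiA' := (Finset.mem_filter.mp hiA).2
    rw [Multiset.mem_toFinset, mem_roots hP0, IsRoot.def]
    rw [hf]
    simp only [dif_pos him]
    rw [← heval i him, hiA']; ring
  have hinj : Set.InjOn f ↑Af := by
    intro a ha b hb hab
    have ham := (Finset.mem_filter.mp ha).2
    have hbm := (Finset.mem_filter.mp hb).2
    rw [hf] at hab
    simp only [dif_pos ham, dif_pos hbm] at hab
    have h2 := heK hab
    exact Fin.ext (by simpa using congrArg Fin.val h2)
  have hAfcard : Af.card ≤ P.natDegree :=
    le_trans (Finset.card_le_card_of_injOn f hroot hinj)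
      (le_trans (Multiset.toFinset_card_le _) (Polynomial.card_roots' P))
  -- A \ Af has at most one element (index with val = m, needs l ≤ m + 1)
  have hdiff : (A \ Af).card ≤ 1 := by
    apply Finset.card_le_one.mpr
    intro a ha b hb
    have ha' := Finset.mem_sdiff.mp ha
    have hb' := Finset.mem_sdiff.mp hb
    have ham : ¬ ((a : ℕ) < m) := fun h => ha'.2 (Finset.mem_filter.mpr ⟨ha'.1, h⟩)
    have hbm : ¬ ((b : ℕ) < m) := fun h => hb'.2 (Finset.mem_filter.mpr ⟨hb'.1, h⟩)
    have hal := a.2; have hbl := b.2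
    exact Fin.ext (by omega)
  have hsplit : A.card ≤ Af.card + 1 := by
    have hsub2 : Af ⊆ A := Finset.filter_subset _ _
    have := Finset.card_sdiff_of_subset hsub2
    have := Finset.card_le_card hsub2
    omega
  by_cases hinfA : ∃ i ∈ A, ¬ ((i : ℕ) < m)
  · -- leading coefficient vanishes
    obtain ⟨i, hiA, him⟩ := hinfA
    have hagree := (Finset.mem_filter.mp hiA).2
    simp only [rsCol, dif_neg him, dif_pos ht] at hagree
    have hDt : D ⟨t - 1, by omega⟩ = 0 := by
      simp only [hD, sub_eq_zero]
      exact hagree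
    have hne : P.natDegree ≠ t - 1 := by
      intro h
      apply Polynomial.leadingCoeff_ne_zero.mpr hP0
      rw [Polynomial.leadingCoeff, h]
      have h3 := hco ⟨t - 1, by omega⟩
      rw [hDt] at h3
      simpa using h3
    omega
  · push_neg at hinfA
    have hAAf : A = Af := by
      rw [hAf]
      exact (Finset.filter_eq_self.mpr hinfA).symm
    rw [hAAf]
    omega

lemma isFrameproof_image_equiv {l c : ℕ} {A B : Type*} (e : A ≃ B)
    {C : Set (Fin l → A)} (hC : IsFrameproof c C) :
    IsFrameproof c ((fun w => e ∘ w) '' C) := by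
  classical
  intro P hP hPc
  set P' : Finset (Fin l → A) := P.image (fun w => e.symm ∘ w) with hP'
  have hmem : ∀ w ∈ P, e.symm ∘ w ∈ P' := fun w hw => Finset.mem_image_of_mem _ hw
  have hP'sub : ↑P' ⊆ C := by
    intro y hy
    rw [hP', Finset.coe_image] at hy
    obtain ⟨w, hw, rfl⟩ := hy
    obtain ⟨y', hy', rfl⟩ := hP hw
    simpa [Function.comp_def] using hy'
  have key := hC P' hP'sub (le_trans (Finset.card_image_le) hPc)
  ext z
  constructor
  · rintro ⟨hzdesc, hzC⟩
    have hz' : e.symm ∘ z ∈ desc ↑P' ∩ C := by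
      constructor
      · intro i
        obtain ⟨y, hy, hyi⟩ := hzdesc i
        exact ⟨e.symm ∘ y, hmem y hy, by simp [hyi]⟩
      · obtain ⟨y, hy, rfl⟩ := hzC
        simpa [Function.comp_def] using hy
    rw [key] at hz'
    rw [hP', Finset.coe_image] at hz'
    obtain ⟨w, hw, hwz⟩ := hz'
    have : z = w := by
      funext i
      have := congrFun hwz i
      simpa using congrArg e this.symm
    rw [this]; exact hw
  · intro hz
    refine ⟨fun i => ⟨z, hz, rfl⟩, hP hz⟩

lemma exists_finite_field (p k : ℕ) (hp : p.Prime) (hk : 0 < k) :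
    ∃ (K : Type) (_ : Field K) (_ : Fintype K), Fintype.card K = p ^ k := by
  haveI : Fact p.Prime := ⟨hp⟩
  haveI : Fintype (GaloisField p k) := Fintype.ofFinite _
  refine ⟨GaloisField p k, inferInstance, inferInstance, ?_⟩
  rw [← Nat.card_eq_fintype_card]
  exact GaloisField.card p k (by omega : k ≠ 0)

/-- Recursive construction: from an `s`-ary `c`-frameproof code with Property P(t)
of cardinality `M`, and a prime power `m ≥ l - 1`, obtain a `c`-frameproof code
over an alphabet of size `q = (s-1)m + 1` with cardinality `M * m^t`. -/
theorem frameproof_recursive {l s t c r M m q : ℕ} (S : Type*) [Fintype S]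
    [DecidableEq S] (hs : Fintype.card S = s) (inf : S) (C : Set (Fin l → S))
    (hC : IsFrameproof c C) (hP : PropertyP t inf C) (hM : C.ncard = M)
    (hm : ∃ p k : ℕ, p.Prime ∧ 0 < k ∧ m = p ^ k)
    (hml : l - 1 ≤ m) (hlt : 2 * t - 1 ≤ l) (htc : t ≤ c)
    (hl : l = c * (t - 1) + r) (hr1 : t ≤ r) (hr2 : r ≤ c)
    (hq : q = (s - 1) * m + 1) :
    ∃ (Q : Type) (_ : Fintype Q), Fintype.card Q = q ∧
      ∃ C' : Set (Fin l → Q), IsFrameproof c C' ∧ C'.ncard = M * m ^ t := by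
  classical
  rcases Nat.eq_zero_or_pos l with hl0 | hlpos
  · -- degenerate case l = 0 : frameproofness forces C = ∅
    subst hl0
    have ht0 : t = 0 := by omega
    have hCempty : C = ∅ := by
      have h := hC (∅ : Finset (Fin 0 → S)) (by simp) (Nat.zero_le c)
      have hdesc : desc ((∅ : Finset (Fin 0 → S)) : Set (Fin 0 → S)) = Set.univ := by
        ext z
        simp only [Set.mem_univ, iff_true, desc, Set.mem_setOf_eq]
        intro i
        exact absurd i.2 (by omega)
      rw [hdesc, Set.univ_inter] at h
      simpa using h
    have hM0 : M = 0 := by rw [← hM, hCempty]; simp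
    refine ⟨Fin q, inferInstance, Fintype.card_fin q, ∅, ?_, by simp [hM0]⟩
    intro P hPsub hPc
    have hPe : P = ∅ := Finset.coe_eq_empty.mp (Set.subset_empty_iff.mp hPsub)
    subst hPe
    simp
  · -- main case
    obtain ⟨p, k, hp, hk, hmpk⟩ := hm
    obtain ⟨K, _, _, hK⟩ : ∃ (K : Type) (_ : Field K) (_ : Fintype K),
        Fintype.card K = m := by
      obtain ⟨K, f1, f2, h⟩ := exists_finite_field p k hp hk
      exact ⟨K, f1, f2, by rw [h, hmpk]⟩
    haveI := Classical.decEq K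
    have hm1 : 1 ≤ m := by rw [← hK]; exact Fintype.card_pos
    set eK : Fin m ≃ K := (Fintype.equivFinOfCardEq hK).symm with heKdef
    have hS' : Fintype.card {a : S // a ≠ inf} = s - 1 := by
      rw [Fintype.card_subtype_compl, Fintype.card_subtype_eq, hs]
    have hQ0card : Fintype.card (Option ({a : S // a ≠ inf} × K)) = q := by
      rw [hq, Fintype.card_option, Fintype.card_prod, hS', hK]
    set e := Fintype.equivFinOfCardEq hQ0card with hedef
    set enc : (Fin l → S) → (Fin t → K) → (Fin l → Option ({a : S // a ≠ inf} × K)) :=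
      fun x v i =>
      if hx : x i = inf then none else some (⟨⟨x i, hx⟩, rsCol (⇑eK) v i⟩) with hencdef
    set C0 : Set (Fin l → Option ({a : S // a ≠ inf} × K)) :=
      (fun pr : (Fin l → S) × (Fin t → K) => enc pr.1 pr.2) '' (C ×ˢ Set.univ) with hC0def
    set J : (Fin l → S) → Finset (Fin l) := fun x => Finset.univ.filter fun i => ¬ x i = inf
      with hJdef
    have hr0 : 1 ≤ r := by
      rcases Nat.eq_zero_or_pos t with h | h
      · rw [h] at hl; simp at hl; omega
      · omega
    have hJcard : ∀ x ∈ C, t ≤ (J x).card ∧ c * (t - 1) + 1 ≤ (J x).card := by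
      intro x hx
      have h1 := hP.1 x hx
      have h2 := Finset.card_filter_add_card_filter_not
        (s := (Finset.univ : Finset (Fin l))) (p := fun i => x i = inf)
      rw [Finset.card_univ, Fintype.card_fin] at h2
      have h3 : (J x).card = (Finset.univ.filter fun i => ¬ x i = inf).card := rfl
      omega
    have decode : ∀ x ∈ C, ∀ (v : Fin t → K), ∀ x' ∈ C, ∀ (v' : Fin t → K),
        ∀ I : Finset (Fin l), t ≤ I.card → (∀ i ∈ I, x i ≠ inf) →
        (∀ i ∈ I, enc x v i = enc x' v' i) → x = x' ∧ v = v' := by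
      intro x hx v x' hx' v' I hI hIinf hIeq
      have hvals : ∀ i ∈ I, x i = x' i ∧ rsCol (⇑eK) v i = rsCol (⇑eK) v' i := by
        intro i hi
        have h := hIeq i hi
        rw [hencdef] at h
        simp only [dif_neg (hIinf i hi)] at h
        by_cases hx'i : x' i = inf
        · simp [hx'i] at h
        · rw [dif_neg hx'i] at h
          have h' := Option.some.inj h
          exact ⟨congrArg (fun z => (z.1 : S)) h', congrArg Prod.snd h'⟩
      have hxx : x = x' := hP.2 x hx x' hx' I hI fun i hi => ⟨(hvals i hi).1, hIinf i hi⟩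
      refine ⟨hxx, ?_⟩
      rcases Nat.eq_zero_or_pos t with ht0 | ht1
      · subst ht0; exact Subsingleton.elim v v'
      · by_contra hvv
        have hagree := rsCol_agree (⇑eK) eK.injective hml hvv
        have hsub : I ⊆ Finset.univ.filter fun i : Fin l =>
            rsCol (⇑eK) v i = rsCol (⇑eK) v' i := by
          intro i hi
          exact Finset.mem_filter.mpr ⟨Finset.mem_univ i, (hvals i hi).2⟩
        have := Finset.card_le_card hsub
        omega
    have hFP0 : IsFrameproof c C0 := by
      intro P hPsub hPc
      ext z
      constructor
      · rintro ⟨hzdesc, hzC0⟩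
        obtain ⟨⟨x, v⟩, hxv, rfl⟩ := hzC0
        have hx : x ∈ C := hxv.1
        simp only at hzdesc ⊢
        obtain ⟨w0, hw0, -⟩ := hzdesc ⟨0, hlpos⟩
        have hJx := hJcard x hx
        have hex : ∃ w ∈ P, t ≤ ((J x).filter fun i => enc x v i = w i).card := by
          rcases Nat.eq_zero_or_pos t with ht0 | ht1
          · exact ⟨w0, hw0, by omega⟩
          · by_contra hcon
            simp only [not_exists, not_and, not_le] at hcon
            have hJsub : J x ⊆ P.biUnion fun w => (J x).filter fun i => enc x v i = w i := by
              intro i hi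
              obtain ⟨w, hw, hwi⟩ := hzdesc i
              exact Finset.mem_biUnion.mpr ⟨w, hw, Finset.mem_filter.mpr ⟨hi, hwi⟩⟩
            have h1 := Finset.card_le_card hJsub
            have h2 := Finset.card_biUnion_le
              (s := P) (t := fun w => (J x).filter fun i => enc x v i = w i)
            have h3a : ∀ w ∈ P, ((J x).filter fun i => enc x v i = w i).card ≤ t - 1 := by
              intro w hw
              exact Nat.le_pred_of_lt (hcon w hw)
            have h3 := Finset.sum_le_card_nsmul P
              (fun w => ((J x).filter fun i => enc x v i = w i).card) (t - 1) h3a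
            rw [smul_eq_mul] at h3
            have h4 : P.card * (t - 1) ≤ c * (t - 1) := Nat.mul_le_mul hPc le_rfl
            have h5 : (J x).card ≤ c * (t - 1) := le_trans h1 (le_trans h2 (le_trans h3 h4))
            exact Nat.not_succ_le_self _ (le_trans hJx.2 h5)
        obtain ⟨w, hwP, hwt⟩ := hex
        obtain ⟨⟨xw, vw⟩, hxwv, hwenc⟩ := hPsub hwP
        have hxwC : xw ∈ C := hxwv.1
        set Jw := (J x).filter fun i => enc x v i = w i with hJwdef
        have harg1 : ∀ i ∈ Jw, x i ≠ inf := by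
          intro i hi
          have h1 := (Finset.mem_filter.mp hi).1
          rw [hJdef] at h1
          exact (Finset.mem_filter.mp h1).2
        have harg2 : ∀ i ∈ Jw, enc x v i = enc xw vw i := by
          intro i hi
          have h2 := (Finset.mem_filter.mp hi).2
          rw [h2, ← hwenc]
        have hdec := decode x hx v xw hxwC vw Jw hwt harg1 harg2
        have : enc x v = w := by
          rw [← hwenc, hdec.1, hdec.2]
        rw [this]
        exact hwP
      · intro hz
        exact ⟨fun i => ⟨z, hz, rfl⟩, hPsub hz⟩
    have hinj : Set.InjOn (fun pr : (Fin l → S) × (Fin t → K) => enc pr.1 pr.2)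
        (C ×ˢ Set.univ) := by
      rintro ⟨x, v⟩ hxv ⟨x', v'⟩ hxv' heq
      simp only at heq
      have hx : x ∈ C := hxv.1
      have hx' : x' ∈ C := hxv'.1
      have harg1 : ∀ i ∈ J x, x i ≠ inf := by
        intro i hi
        rw [hJdef] at hi
        exact (Finset.mem_filter.mp hi).2
      have hdec := decode x hx v x' hx' v' (J x) (hJcard x hx).1 harg1
        fun i _ => congrFun heq i
      exact Prod.ext hdec.1 hdec.2
    have hncard : C0.ncard = M * m ^ t := by
      rw [hC0def, Set.ncard_image_of_injOn hinj]
      rw [← Nat.card_coe_set_eq, Nat.card_congr (Equiv.Set.prod _ _), Nat.card_prod]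
      rw [Nat.card_coe_set_eq, Nat.card_coe_set_eq, hM, Set.ncard_univ,
        Nat.card_eq_fintype_card]
      rw [Fintype.card_fun, hK, Fintype.card_fin]
    have hinj2 : Function.Injective
        (fun w : Fin l → Option ({a : S // a ≠ inf} × K) => ⇑e ∘ w) :=
      fun w w' h => funext fun i => e.injective (congrFun h i)
    refine ⟨Fin q, inferInstance, Fintype.card_fin q,
      (fun w => e ∘ w) '' C0, isFrameproof_image_equiv e hFP0, ?_⟩
    rw [Set.ncard_image_of_injective C0 hinj2]
    exact hncard
end

section
/- Under the hypotheses of the recursive construction (Lemma on Property P(t)), the resulting c-frameproof code of length l over the alphabet of size q = (s-1)m+1 also satisfies Property P(t), with special element (∞,∞). -/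
open Finset

section Aux

open Polynomial

variable {F : Type*} [Field F]

/-- Evaluation of the "polynomial" with coefficient vector `v` at a point of
`F ∪ {∞}`; at `∞` the value is the top coefficient. -/
def evO {t : ℕ} (v : Fin t → F) : Option F → F
  | none => if h : 0 < t then v ⟨t - 1, Nat.sub_lt h Nat.one_pos⟩ else 0
  | some a => ∑ j : Fin t, v j * a ^ (j : ℕ)

lemma evO_sub {t : ℕ} (v w : Fin t → F) (a : Option F) :
    evO (v - w) a = evO v a - evO w a := by
  cases a with
  | none =>
      simp only [evO]
      split_ifs <;> simp
  | some a =>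
      simp [evO, sub_mul, Finset.sum_sub_distrib]

lemma evO_eq_zero {t : ℕ} (d : Fin t → F) (A : Finset (Option F))
    (hA : t ≤ A.card) (h0 : ∀ a ∈ A, evO d a = 0) : d = 0 := by
  classical
  rcases Nat.eq_zero_or_pos t with ht | ht
  · subst ht; funext i; exact absurd i.2 (by omega)
  set p : F[X] := ∑ j : Fin t, C (d j) * X ^ (j : ℕ) with hpdef
  have hcoeff : ∀ n, p.coeff n = if h : n < t then d ⟨n, h⟩ else 0 := by
    intro n
    rw [hpdef, Polynomial.finset_sum_coeff]
    simp only [Polynomial.coeff_C_mul, Polynomial.coeff_X_pow, mul_ite, mul_one, mul_zero]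
    split_ifs with h
    · rw [Finset.sum_eq_single (⟨n, h⟩ : Fin t)]
      · simp
      · intro j _ hj
        rw [if_neg]
        intro hnj
        exact hj (by ext; simp [hnj])
      · simp
    · apply Finset.sum_eq_zero
      intro j _
      rw [if_neg]
      intro hnj
      exact h (hnj ▸ j.2)
  have heval : ∀ a : F, p.eval a = evO d (some a) := by
    intro a
    simp [hpdef, evO, Polynomial.eval_finset_sum]
  suffices hp0 : p = 0 by
    funext j
    have h1 := hcoeff j
    rw [hp0, Polynomial.coeff_zero] at h1
    simpa [j.2] using h1.symm
  by_cases hmem : (none : Option F) ∈ A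
  · have htop : d ⟨t - 1, Nat.sub_lt ht Nat.one_pos⟩ = 0 := by
      have := h0 none hmem
      simpa [evO, ht] using this
    set B := A.erase none with hB
    have hBcard : t - 1 ≤ B.card := by
      rw [hB, Finset.card_erase_of_mem hmem]; omega
    set s : Finset F := B.image (fun o => o.getD 0) with hs
    have hscard : t - 1 ≤ s.card := by
      rw [hs, Finset.card_image_of_injOn]
      · exact hBcard
      · intro o₁ h₁ o₂ h₂ he
        rcases Option.ne_none_iff_exists'.1 (Finset.ne_of_mem_erase h₁) with ⟨a₁, rfl⟩
        rcases Option.ne_none_iff_exists'.1 (Finset.ne_of_mem_erase h₂) with ⟨a₂, rfl⟩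
        simpa using he
    have hroots : ∀ a ∈ s, p.eval a = 0 := by
      intro a ha
      rcases Finset.mem_image.1 ha with ⟨o, ho, rfl⟩
      rcases Option.ne_none_iff_exists'.1 (Finset.ne_of_mem_erase ho) with ⟨b, rfl⟩
      rw [heval]
      exact h0 _ (Finset.mem_of_mem_erase ho)
    have hdeg : p.degree < ((t - 1 : ℕ) : WithBot ℕ) := by
      rw [Polynomial.degree_lt_iff_coeff_zero]
      intro mm hm
      rw [hcoeff]
      split_ifs with h
      · have hmeq : mm = t - 1 := by omega
        subst hmeq
        exact htop
      · rfl
    by_cases hp0 : p = 0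
    · exact hp0
    · have hnd : p.natDegree < t - 1 := by
        rw [Polynomial.natDegree_lt_iff_degree_lt hp0]
        exact hdeg
      exact Polynomial.eq_zero_of_natDegree_lt_card_of_eval_eq_zero' p s hroots
        (lt_of_lt_of_le hnd hscard)
  · set s : Finset F := A.image (fun o => o.getD 0) with hs
    have hscard : t ≤ s.card := by
      rw [hs, Finset.card_image_of_injOn]
      · exact hA
      · intro o₁ h₁ o₂ h₂ he
        rcases Option.ne_none_iff_exists'.1 (fun hh => hmem (hh ▸ h₁)) with ⟨a₁, rfl⟩
        rcases Option.ne_none_iff_exists'.1 (fun hh => hmem (hh ▸ h₂)) with ⟨a₂, rfl⟩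
        simpa using he
    have hroots : ∀ a ∈ s, p.eval a = 0 := by
      intro a ha
      rcases Finset.mem_image.1 ha with ⟨o, ho, rfl⟩
      rcases Option.ne_none_iff_exists'.1 (fun hh => hmem (hh ▸ ho)) with ⟨b, rfl⟩
      rw [heval]
      exact h0 _ ho
    have hdeg : p.degree < ((t : ℕ) : WithBot ℕ) := by
      rw [Polynomial.degree_lt_iff_coeff_zero]
      intro mm hm
      rw [hcoeff, dif_neg (by omega)]
    by_cases hp0 : p = 0
    · exact hp0
    · have hnd : p.natDegree < t := by
        rw [Polynomial.natDegree_lt_iff_degree_lt hp0]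
        exact hdeg
      exact Polynomial.eq_zero_of_natDegree_lt_card_of_eval_eq_zero' p s hroots
        (lt_of_lt_of_le hnd hscard)

lemma evO_inj {t l : ℕ} (α : Fin l ↪ Option F) (v w : Fin t → F) (I : Finset (Fin l))
    (hI : t ≤ I.card) (h : ∀ i ∈ I, evO v (α i) = evO w (α i)) : v = w := by
  classical
  have h0 : v - w = 0 := by
    apply evO_eq_zero (v - w) (I.image α)
    · rwa [Finset.card_image_of_injective _ α.injective]
    · intro a ha
      rcases Finset.mem_image.1 ha with ⟨i, hi, rfl⟩
      rw [evO_sub, h i hi, sub_self]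
  funext j
  have := congrFun h0 j
  simpa [sub_eq_zero] using this

/-- The word of the recursive construction associated to `y` and coefficient
vector `v`. -/
def constrW {l s t : ℕ} {F : Type*} [Field F] (i0 : Fin s) (α : Fin l ↪ Option F)
    (y : Fin l → Fin s) (v : Fin t → F) (i : Fin l) :
    Option ({a : Fin s // a ≠ i0} × F) :=
  if h : y i = i0 then none else some ⟨⟨y i, h⟩, evO v (α i)⟩

lemma constrW_none {l s t : ℕ} (i0 : Fin s) (α : Fin l ↪ Option F)
    (y : Fin l → Fin s) (v : Fin t → F) (i : Fin l) :
    constrW i0 α y v i = none ↔ y i = i0 := by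
  unfold constrW; split_ifs with h <;> simp [h]

lemma constrW_fst {l s t : ℕ} {i0 : Fin s} {α : Fin l ↪ Option F}
    {y y' : Fin l → Fin s} {v v' : Fin t → F} {i : Fin l}
    (h : constrW i0 α y v i = constrW i0 α y' v' i) : y i = y' i := by
  unfold constrW at h
  by_cases h1 : y i = i0 <;> by_cases h2 : y' i = i0
  · rw [h1, h2]
  · rw [dif_pos h1, dif_neg h2] at h; exact absurd h (by simp)
  · rw [dif_neg h1, dif_pos h2] at h; exact absurd h (by simp)
  · rw [dif_neg h1, dif_neg h2] at h
    simp only [Option.some_inj, Prod.mk.injEq, Subtype.mk.injEq] at h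
    exact h.1

lemma constrW_snd {l s t : ℕ} {i0 : Fin s} {α : Fin l ↪ Option F}
    {y y' : Fin l → Fin s} {v v' : Fin t → F} {i : Fin l} (h1 : y i ≠ i0)
    (h : constrW i0 α y v i = constrW i0 α y' v' i) :
    evO v (α i) = evO v' (α i) := by
  have h2 : y' i ≠ i0 := fun hh =>
    h1 ((constrW_none i0 α y v i).1 (h.trans ((constrW_none i0 α y' v' i).2 hh)))
  unfold constrW at h
  simp only [dif_neg h1, dif_neg h2, Option.some_inj, Prod.mk.injEq,
    Subtype.mk.injEq] at h
  exact h.2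

end Aux

lemma frameproof_of_propertyP {l t c : ℕ} {Q : Type*} [DecidableEq Q] (inf' : Q)
    (C' : Set (Fin l → Q)) (hl0 : 0 < l) (hl : c * (t - 1) + t ≤ l)
    (hP : PropertyP t inf' C') : IsFrameproof c C' := by
  classical
  intro P hPC hPc
  apply Set.Subset.antisymm
  · rintro x ⟨hxd, hxC⟩
    have hg : ∀ i : Fin l, ∃ y : Fin l → Q, y ∈ P ∧ x i = y i := by
      intro i
      rcases hxd i with ⟨y, hy, hxy⟩
      exact ⟨y, hy, hxy⟩
    choose g hgP hgx using hg
    set Ns : Finset (Fin l) := Finset.univ.filter (fun i => ¬ (x i = inf')) with hNs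
    have hfe : (Finset.univ.filter fun i => x i = inf').card ≤ t - 1 := hP.1 x hxC
    have hsplit : (Finset.univ.filter fun i => x i = inf').card + Ns.card = l := by
      rw [hNs, Finset.card_filter_add_card_filter_not, Finset.card_univ,
        Fintype.card_fin]
    have hmul : P.card * (t - 1) ≤ c * (t - 1) := Nat.mul_le_mul_right _ hPc
    have hb0 : t = 0 → c * (t - 1) = 0 := by intro h; simp [h]
    have hlt : P.card * (t - 1) < Ns.card := by
      set a := P.card * (t - 1)
      set b := c * (t - 1)
      omega
    obtain ⟨y, hyP, hy⟩ := Finset.exists_lt_card_fiber_of_mul_lt_card_of_maps_to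
      (f := g) (fun i _ => hgP i) hlt
    have heq : x = y := by
      apply hP.2 x hxC y (hPC hyP) (Ns.filter (fun i => g i = y))
      · omega
      · intro i hi
        rw [Finset.mem_filter] at hi
        have hins : i ∈ Ns := hi.1
        rw [hNs, Finset.mem_filter] at hins
        exact ⟨(hgx i).trans (by rw [hi.2]), hins.2⟩
    rw [heq]
    exact hyP
  · intro x hx
    exact ⟨fun i => ⟨x, hx, rfl⟩, hPC hx⟩

/-- The code resulting from the recursive construction also satisfies
Property P(t) (with a new special element). -/
theorem frameproof_recursive_propertyP {l s t c r M m q : ℕ} (S : Type*) [Fintype S]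
    [DecidableEq S] (hs : Fintype.card S = s) (inf : S) (C : Set (Fin l → S))
    (hC : IsFrameproof c C) (hP : PropertyP t inf C) (hM : C.ncard = M)
    (hm : ∃ p k : ℕ, p.Prime ∧ 0 < k ∧ m = p ^ k)
    (hml : l - 1 ≤ m) (hlt : 2 * t - 1 ≤ l) (htc : t ≤ c)
    (hl : l = c * (t - 1) + r) (hr1 : t ≤ r) (hr2 : r ≤ c)
    (hq : q = (s - 1) * m + 1) :
    ∃ (Q : Type) (_ : Fintype Q) (_ : DecidableEq Q), Fintype.card Q = q ∧
      ∃ (C' : Set (Fin l → Q)) (inf' : Q), IsFrameproof c C' ∧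
        C'.ncard = M * m ^ t ∧ PropertyP t inf' C' := by
  classical
  obtain ⟨p, k, hpp, hk, hmpk⟩ := hm
  haveI : Fact p.Prime := ⟨hpp⟩
  haveI : Fintype (GaloisField p k) := Fintype.ofFinite _
  set F : Type := GaloisField p k with hF
  have hFcard : Fintype.card F = m := by
    rw [← Nat.card_eq_fintype_card, hF, GaloisField.card p k hk.ne', hmpk]
  let e : S ≃ Fin s := (Fintype.equivFin S).trans (finCongr hs)
  set i0 : Fin s := e inf with hi0
  obtain ⟨α⟩ : Nonempty (Fin l ↪ Option F) := Function.Embedding.nonempty_of_card_le (by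
    rw [Fintype.card_fin, Fintype.card_option, hFcard]; omega)
  set C₂ : Set (Fin l → Fin s) := (fun w => e ∘ w) '' C with hC2
  have hcomp_inj : Function.Injective (fun w : Fin l → S => e ∘ w) := fun w₁ w₂ h =>
    funext fun i => e.injective (congrFun h i)
  have hC2card : C₂.ncard = M := by
    rw [hC2, Set.ncard_image_of_injective _ hcomp_inj, hM]
  have hP2 : PropertyP t i0 C₂ := by
    constructor
    · rintro x ⟨y, hy, rfl⟩
      have heqf : (Finset.univ.filter fun i => ((fun w => e ∘ w) y) i = i0) =
          (Finset.univ.filter fun i => y i = inf) := by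
        apply Finset.filter_congr
        intro i _
        simp [hi0, Function.comp]
      rw [heqf]
      exact hP.1 y hy
    · rintro x ⟨y, hy, rfl⟩ x' ⟨y', hy', rfl⟩ I hI hagree
      have hyy : y = y' := by
        apply hP.2 y hy y' hy' I hI
        intro i hi
        obtain ⟨h1, h2⟩ := hagree i hi
        refine ⟨e.injective h1, fun hne => h2 ?_⟩
        simp [Function.comp, hne, hi0]
      rw [hyy]
  have hns : ∀ y ∈ C₂, t ≤ (Finset.univ.filter fun i => ¬ (y i = i0)).card := by
    intro y hy
    have h1 := hP2.1 y hy
    have h2 : (Finset.univ.filter fun i => y i = i0).card +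
        (Finset.univ.filter fun i => ¬ (y i = i0)).card = l := by
      rw [Finset.card_filter_add_card_filter_not, Finset.card_univ, Fintype.card_fin]
    omega
  set C' : Set (Fin l → Option ({a : Fin s // a ≠ i0} × F)) :=
    (fun yv : (Fin l → Fin s) × (Fin t → F) => constrW i0 α yv.1 yv.2) ''
      (C₂ ×ˢ Set.univ) with hC'
  have hinj : Set.InjOn (fun yv : (Fin l → Fin s) × (Fin t → F) => constrW i0 α yv.1 yv.2)
      (C₂ ×ˢ Set.univ) := by
    rintro ⟨y, v⟩ hyv ⟨y', v'⟩ hyv' h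
    have hy : y ∈ C₂ := hyv.1
    have hyy : y = y' := funext fun i => constrW_fst (congrFun h i)
    subst hyy
    have hvv : v = v' := by
      apply evO_inj α v v' (Finset.univ.filter fun i => ¬ (y i = i0)) (hns y hy)
      intro i hi
      rw [Finset.mem_filter] at hi
      exact constrW_snd hi.2 (congrFun h i)
    rw [hvv]
  have hC'card : C'.ncard = M * m ^ t := by
    rw [hC', Set.ncard_image_of_injOn hinj, ← Nat.card_coe_set_eq,
      Nat.card_congr (Equiv.Set.prod _ _), Nat.card_prod, Nat.card_coe_set_eq,
      Nat.card_coe_set_eq, hC2card, Set.ncard_univ, Nat.card_fun,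
      Nat.card_eq_fintype_card, Nat.card_eq_fintype_card, hFcard, Fintype.card_fin]
  have hP' : PropertyP t (none : Option ({a : Fin s // a ≠ i0} × F)) C' := by
    constructor
    · rintro x ⟨⟨y, v⟩, hyv, rfl⟩
      have heqf : (Finset.univ.filter fun i => constrW i0 α y v i = none) =
          (Finset.univ.filter fun i => y i = i0) := by
        apply Finset.filter_congr
        intro i _
        simp [constrW_none]
      rw [heqf]
      exact hP2.1 y hyv.1
    · rintro x ⟨⟨y, v⟩, hyv, rfl⟩ x' ⟨⟨y', v'⟩, hyv', rfl⟩ I hI hagree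
      have hag : ∀ i ∈ I, y i = y' i ∧ y i ≠ i0 := by
        intro i hi
        obtain ⟨h1, h2⟩ := hagree i hi
        exact ⟨constrW_fst h1, fun hh => h2 ((constrW_none i0 α y v i).2 hh)⟩
      have hyy : y = y' := hP2.2 y hyv.1 y' hyv'.1 I hI hag
      subst hyy
      have hvv : v = v' := by
        apply evO_inj α v v' I hI
        intro i hi
        exact constrW_snd (hag i hi).2 ((hagree i hi).1)
      rw [hvv]
  have hFP : IsFrameproof c C' := by
    by_cases hl0 : 0 < l
    · exact frameproof_of_propertyP none C' hl0
        (hl ▸ Nat.add_le_add_left hr1 _) hP'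
    · have hlz : l = 0 := by omega
      have hCempty : C = ∅ := by
        ext x
        simp only [Set.mem_empty_iff_false, iff_false]
        intro hx
        have h := hC ∅ (by simp) (Nat.zero_le c)
        have hxd : x ∈ desc (↑(∅ : Finset (Fin l → S))) := by
          intro i
          exact absurd i.2 (by omega)
        have hmem : x ∈ (↑(∅ : Finset (Fin l → S)) : Set _) :=
          h ▸ Set.mem_inter hxd hx
        simp at hmem
      have hC2e : C₂ = ∅ := by rw [hC2, hCempty, Set.image_empty]
      have hC'e : C' = ∅ := by rw [hC', hC2e, Set.empty_prod, Set.image_empty]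
      rw [hC'e]
      intro P hPC hPc
      have hPe : P = ∅ := Finset.eq_empty_of_forall_notMem fun x hx => (hPC hx).elim
      subst hPe
      simp
  refine ⟨Option ({a : Fin s // a ≠ i0} × F), inferInstance, inferInstance, ?_, C', none,
    hFP, hC'card, ?_⟩
  · rw [Fintype.card_option, Fintype.card_prod, hFcard]
    have h1 : Fintype.card {a : Fin s // a ≠ i0} = s - 1 := by
      rw [Fintype.card_subtype_compl, Fintype.card_subtype_eq, Fintype.card_fin]
    rw [h1, hq]
  · exact hP'
end

section
/- For every odd integer q > 1, there exists a q-ary 2-frameproof code of length 4 with cardinality 2(q-1)^2 + 1. -/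
open Finset

namespace FPAux

set_option linter.unusedSectionVars false
set_option linter.unreachableTactic false
set_option linter.unusedTactic false

/-- Embedding of `ZMod 2 × ZMod m` onto the nonzero symbols of `Fin (2m+1)`. -/
def phi (m : ℕ) (e : ZMod 2) (y : ZMod m) : Fin (2 * m + 1) :=
  ⟨(1 + e.val * m + y.val) % (2 * m + 1), Nat.mod_lt _ (by omega)⟩

/-- Base bit pattern of each class. -/
def cbit : Fin 4 → Fin 4 → ZMod 2 := fun i j =>
  if (i = 1 ∧ j = 3) ∨ (i = 2 ∧ j = 1) ∨ (i = 3 ∧ j = 2) then 1 else 0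

/-- `ZMod m`-parts of the codeword of class `i` with parameters `u`, `v`. -/
def yv (m : ℕ) (i : Fin 4) (u v : ZMod m) : Fin 4 → ZMod m :=
  ![![0, u, v, -u - v], ![u, 0, v, -u - v], ![u, v, 0, -u - v], ![u, v, -u - v, 0]] i

/-- The codewords other than the all-zero word. -/
def psi (m : ℕ) (p : Fin 4 × ZMod 2 × ZMod m × ZMod m) : Fin 4 → Fin (2 * m + 1) :=
  fun j => if j = p.1 then (0 : Fin (2 * m + 1)) else
    phi m (cbit p.1 j + p.2.1) (yv m p.1 p.2.2.1 p.2.2.2 j)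

/-- The code. -/
def Code (m : ℕ) : Set (Fin 4 → Fin (2 * m + 1)) :=
  insert (fun _ => 0) (Set.range (psi m))

lemma cbit_cross : ∀ i i' j k : Fin 4, i ≠ i' → j ≠ k → j ≠ i → j ≠ i' → k ≠ i → k ≠ i' →
    cbit i j - cbit i' j ≠ cbit i k - cbit i' k := by decide

lemma exists_two (i : Fin 4) : ∃ j k : Fin 4, j ≠ k ∧ j ≠ i ∧ k ≠ i := by
  revert i; decide

lemma exists_one (i i' : Fin 4) : ∃ j : Fin 4, j ≠ i ∧ j ≠ i' := by
  revert i i'; decide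

lemma exists_three (i : Fin 4) :
    ∃ a b c : Fin 4, a ≠ b ∧ a ≠ c ∧ b ≠ c ∧ a ≠ i ∧ b ≠ i ∧ c ≠ i := by
  revert i; decide

variable {m : ℕ} [NeZero m]

lemma phi_val (e : ZMod 2) (y : ZMod m) :
    (phi m e y).val = 1 + e.val * m + y.val := by
  have he : e.val < 2 := ZMod.val_lt e
  have hy : y.val < m := ZMod.val_lt y
  simp only [phi]
  exact Nat.mod_eq_of_lt (by nlinarith)

lemma phi_ne_zero (e : ZMod 2) (y : ZMod m) : phi m e y ≠ 0 := by
  intro h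
  have := congrArg Fin.val h
  rw [phi_val] at this
  simp at this

lemma phi_inj {e e' : ZMod 2} {y y' : ZMod m} (h : phi m e y = phi m e' y') :
    e = e' ∧ y = y' := by
  have hv := congrArg Fin.val h
  rw [phi_val, phi_val] at hv
  have he : e.val < 2 := ZMod.val_lt e
  have he' : e'.val < 2 := ZMod.val_lt e'
  have hy : y.val < m := ZMod.val_lt y
  have hy' : y'.val < m := ZMod.val_lt y'
  have h1 : e.val = e'.val := by nlinarith
  have h2 : y.val = y'.val := by nlinarith
  exact ⟨ZMod.val_injective 2 h1, ZMod.val_injective m h2⟩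

lemma psi_eq_zero_iff (p : Fin 4 × ZMod 2 × ZMod m × ZMod m) (j : Fin 4) :
    psi m p j = 0 ↔ j = p.1 := by
  constructor
  · intro h
    by_contra hj
    rw [psi, if_neg hj] at h
    exact phi_ne_zero _ _ h
  · intro h; rw [psi, if_pos h]

lemma yv_agree {i j k : Fin 4} {u v u' v' : ZMod m} (hjk : j ≠ k) (hji : j ≠ i) (hki : k ≠ i)
    (h1 : yv m i u v j = yv m i u' v' j) (h2 : yv m i u v k = yv m i u' v' k) :
    u = u' ∧ v = v' := by
  fin_cases i <;> fin_cases j <;> fin_cases k <;>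
    first
    | exact absurd rfl hjk | exact absurd rfl hji | exact absurd rfl hki
    | (simp [yv, Matrix.vecHead, Matrix.vecTail] at h1 h2
       refine ⟨?_, ?_⟩ <;>
         first
           | exact h1 | exact h2
           | linear_combination h1 | linear_combination h2
           | linear_combination -h1 - h2 | linear_combination h1 + h2
           | linear_combination -h1 + h2 | linear_combination h1 - h2
           | linear_combination -h1 | linear_combination -h2)

/-- Key lemma: two codewords from `psi` agreeing in two coordinates where the first
one is nonzero, are equal. -/
lemma psi_agree {p p' : Fin 4 × ZMod 2 × ZMod m × ZMod m} {j k : Fin 4}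
    (hjk : j ≠ k) (hj0 : psi m p j ≠ 0) (hk0 : psi m p k ≠ 0)
    (hj : psi m p j = psi m p' j) (hk : psi m p k = psi m p' k) : p = p' := by
  have hji : j ≠ p.1 := fun h => hj0 ((psi_eq_zero_iff _ _).2 h)
  have hki : k ≠ p.1 := fun h => hk0 ((psi_eq_zero_iff _ _).2 h)
  have hji' : j ≠ p'.1 := by
    intro h; rw [hj] at hj0; exact hj0 ((psi_eq_zero_iff _ _).2 h)
  have hki' : k ≠ p'.1 := by
    intro h; rw [hk] at hk0; exact hk0 ((psi_eq_zero_iff _ _).2 h)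
  obtain ⟨i, e, u, v⟩ := p
  obtain ⟨i', e', u', v'⟩ := p'
  simp only [psi] at hj hk
  rw [if_neg hji, if_neg hji'] at hj
  rw [if_neg hki, if_neg hki'] at hk
  obtain ⟨hje, hjy⟩ := phi_inj hj
  obtain ⟨hke, hky⟩ := phi_inj hk
  by_cases hii : i = i'
  · subst hii
    have he : e = e' := by linear_combination hje
    obtain ⟨hu, hv⟩ := yv_agree hjk hji hki hjy hky
    rw [he, hu, hv]
  · exact absurd (by linear_combination hje - hke) (cbit_cross i i' j k hii hjk hji hji' hki hki')

lemma psi_inj : Function.Injective (psi m) := by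
  intro p p' h
  obtain ⟨j, k, hjk, hj, hk⟩ := exists_two p.1
  exact psi_agree hjk (fun h0 => hj ((psi_eq_zero_iff _ _).1 h0))
    (fun h0 => hk ((psi_eq_zero_iff _ _).1 h0)) (congrFun h j) (congrFun h k)

lemma zero_notin_range : (fun _ => (0 : Fin (2 * m + 1))) ∉ Set.range (psi m) := by
  rintro ⟨p, hp⟩
  obtain ⟨j, k, hjk, hj, hk⟩ := exists_two p.1
  have := congrFun hp j
  exact (fun h0 => hj ((psi_eq_zero_iff _ _).1 h0)) this

lemma code_ncard : (Code m).ncard = 8 * m ^ 2 + 1 := by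
  rw [Code, Set.ncard_insert_of_notMem zero_notin_range (Set.toFinite _)]
  have : (Set.range (psi m)).ncard = Nat.card (Fin 4 × ZMod 2 × ZMod m × ZMod m) := by
    rw [← Nat.card_coe_set_eq, Nat.card_range_of_injective psi_inj]
  rw [this]
  simp [Nat.card_eq_fintype_card, ZMod.card]
  ring

lemma code_frameproof : IsFrameproof 2 (Code m) := by
  intro P hP hcard
  apply Set.eq_of_subset_of_subset
  · rintro z ⟨hzdesc, hzC⟩
    obtain h0 | h1 | h2 : P.card = 0 ∨ P.card = 1 ∨ P.card = 2 := by omega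
    · rw [Finset.card_eq_zero] at h0
      subst h0
      obtain ⟨y, hy, -⟩ := hzdesc 0
      simp at hy
    · obtain ⟨x, rfl⟩ := Finset.card_eq_one.mp h1
      have : z = x := by
        funext i
        obtain ⟨y, hy, hzy⟩ := hzdesc i
        simp only [Finset.coe_singleton, Set.mem_singleton_iff] at hy
        rw [hzy, hy]
      simp [this]
    · obtain ⟨x, y, hxy, rfl⟩ := Finset.card_eq_two.mp h2
      have hx : x ∈ Code m := hP (by simp)
      have hy : y ∈ Code m := hP (by simp)
      have hzi : ∀ i, z i = x i ∨ z i = y i := by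
        intro i
        obtain ⟨w, hw, h⟩ := hzdesc i
        simp only [Finset.coe_insert, Set.mem_insert_iff, Finset.coe_singleton,
          Set.mem_singleton_iff] at hw
        rcases hw with rfl | rfl
        · exact Or.inl h
        · exact Or.inr h
      simp only [Finset.coe_insert, Set.mem_insert_iff, Finset.coe_singleton,
        Set.mem_singleton_iff]
      rcases hzC with hz0 | ⟨pz, rfl⟩
      · -- z is the all-zero word
        rcases hx with hx0 | ⟨px, rfl⟩
        · left; rw [hz0, hx0]
        · rcases hy with hy0 | ⟨py, rfl⟩
          · right; rw [hz0, hy0]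
          · exfalso
            obtain ⟨j, hj1, hj2⟩ := exists_one px.1 py.1
            have hzj : z j = 0 := by rw [hz0]
            rcases hzi j with h | h
            · exact hj1 ((psi_eq_zero_iff _ _).1 (by rw [← h, hzj]))
            · exact hj2 ((psi_eq_zero_iff _ _).1 (by rw [← h, hzj]))
      · -- z = psi pz
        have hxC := hx
        have key : ∀ w, w ∈ Code m → ∀ j k : Fin 4, j ≠ k → j ≠ pz.1 → k ≠ pz.1 →
            psi m pz j = w j → psi m pz k = w k → psi m pz = w := by
          rintro w hw j k hjk hj hk h1 h2
          have hj0 : psi m pz j ≠ 0 := fun h0 => hj ((psi_eq_zero_iff _ _).1 h0)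
          have hk0 : psi m pz k ≠ 0 := fun h0 => hk ((psi_eq_zero_iff _ _).1 h0)
          rcases hw with hw0 | ⟨pw, rfl⟩
          · exact absurd (by rw [h1, hw0]) hj0
          · rw [psi_agree hjk hj0 hk0 h1 h2]
        obtain ⟨a, b, c, hab, hac, hbc, ha, hb, hc⟩ := exists_three pz.1
        rcases hzi a with h1 | h1 <;> rcases hzi b with h2 | h2 <;>
            rcases hzi c with h3 | h3 <;>
          first
            | exact Or.inl (key x hx a b hab ha hb h1 h2)
            | exact Or.inl (key x hx a c hac ha hc h1 h3)
            | exact Or.inl (key x hx b c hbc hb hc h2 h3)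
            | exact Or.inr (key y hy a b hab ha hb h1 h2)
            | exact Or.inr (key y hy a c hac ha hc h1 h3)
            | exact Or.inr (key y hy b c hbc hb hc h2 h3)
  · intro x hx
    exact ⟨fun i => ⟨x, hx, rfl⟩, hP hx⟩

end FPAux

/-- For every odd `q > 1` there is a `q`-ary 2-frameproof code of length 4 with
cardinality `2(q-1)^2 + 1`. -/
theorem exists_frameproof_c2_l4 (q : ℕ) (hodd : q % 2 = 1) (hq : 1 < q) :
    ∃ C : Set (Fin 4 → Fin q), IsFrameproof 2 C ∧
      C.ncard = 2 * (q - 1) ^ 2 + 1 := by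
  obtain ⟨m, hm, rfl⟩ : ∃ m, 0 < m ∧ q = 2 * m + 1 := ⟨q / 2, by omega, by omega⟩
  haveI : NeZero m := ⟨by omega⟩
  refine ⟨FPAux.Code m, FPAux.code_frameproof, ?_⟩
  rw [FPAux.code_ncard]
  have h1 : 2 * m + 1 - 1 = 2 * m := by omega
  rw [h1]
  ring
end

section
/- For every integer q ≡ 4 (mod 6), there exists a q-ary 3-frameproof code of length 5 with cardinality (5/3)(q-1)^2 + 1. -/
open Finset

set_option linter.unusedSectionVars false
set_option linter.unusedVariables false

namespace FP5

def e5 (p : Fin 5) : ZMod 5 := (p.val : ZMod 5)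
lemma e5_inj : Function.Injective e5 := by decide
def d5 (z : ZMod 5) : Fin 5 := ⟨z.val, ZMod.val_lt z⟩
lemma e5_d5 (z : ZMod 5) : e5 (d5 z) = z := by
  simp [e5, d5, ZMod.natCast_val, ZMod.cast_id]
def z5 (j : Fin 4) : ZMod 5 := ((j.val + 1 : ℕ) : ZMod 5)
lemma z5_inj : Function.Injective z5 := by decide
def slotIdx (p : Fin 5) (ρ : ZMod 5) (h : e5 p ≠ ρ) : Fin 4 :=
  ⟨(e5 p - ρ).val - 1, by
    have h1 : (e5 p - ρ).val ≠ 0 := by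
      simp only [ne_eq, ZMod.val_eq_zero, sub_eq_zero]; exact h
    have h2 : (e5 p - ρ).val < 5 := ZMod.val_lt _
    omega⟩
lemma z5_slotIdx (p : Fin 5) (ρ : ZMod 5) (h : e5 p ≠ ρ) :
    z5 (slotIdx p ρ h) = e5 p - ρ := by
  have h1 : (e5 p - ρ).val ≠ 0 := by
    simp only [ne_eq, ZMod.val_eq_zero, sub_eq_zero]; exact h
  have h3 : (e5 p - ρ).val - 1 + 1 = (e5 p - ρ).val := by omega
  simp only [z5, slotIdx, h3]
  simp [ZMod.natCast_val, ZMod.cast_id]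


section Skeleton

variable {q s : ℕ} {A B I : Type*} [AddCommGroup A] [Fintype A] [DecidableEq A]
  [Fintype B] [Fintype I]

noncomputable def inf (hq : q = 3 * s + 1) : Fin q := ⟨3 * s, by omega⟩

noncomputable def emb (hq : q = 3 * s + 1) (hA : Fintype.card A ≤ 3 * s) (x : A) :
    Fin q :=
  ⟨(Fintype.equivFin A x).val, by have := (Fintype.equivFin A x).isLt; omega⟩

lemma emb_ne_inf (hq : q = 3 * s + 1) (hA : Fintype.card A ≤ 3 * s) (x : A) :
    emb hq hA x ≠ inf hq := by
  have := (Fintype.equivFin A x).isLt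
  simp only [emb, inf, ne_eq, Fin.mk.injEq]
  omega

lemma emb_inj (hq : q = 3 * s + 1) (hA : Fintype.card A ≤ 3 * s) :
    Function.Injective (emb (A := A) hq hA) := by
  intro x y hxy
  simp only [emb, Fin.mk.injEq] at hxy
  exact (Fintype.equivFin A).injective (Fin.val_injective hxy)

/-- the codewords -/
noncomputable def word (hq : q = 3 * s + 1) (hA : Fintype.card A ≤ 3 * s)
    (ψ : B → A) (a : I → Fin 4 → A) (ρ : ZMod 5) (τ : B) (i : I) : Fin 5 → Fin q :=
  fun p => if h : e5 p = ρ then inf hq else emb hq hA (a i (slotIdx p ρ h) + ψ τ)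

lemma word_eq_inf_iff (hq : q = 3 * s + 1) (hA : Fintype.card A ≤ 3 * s)
    (ψ : B → A) (a : I → Fin 4 → A) (ρ : ZMod 5) (τ : B) (i : I) (p : Fin 5) :
    word hq hA ψ a ρ τ i p = inf hq ↔ e5 p = ρ := by
  unfold word
  split
  · simpa
  · rename_i h
    simp only [h, iff_false]
    exact emb_ne_inf hq hA _

lemma word_apply (hq : q = 3 * s + 1) (hA : Fintype.card A ≤ 3 * s)
    (ψ : B → A) (a : I → Fin 4 → A) (ρ : ZMod 5) (τ : B) (i : I) (p : Fin 5)
    (h : e5 p ≠ ρ) :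
    word hq hA ψ a ρ τ i p = emb hq hA (a i (slotIdx p ρ h) + ψ τ) := by
  unfold word
  split
  · exact absurd ‹_› h
  · rfl

/-- Key lemma: if two codewords agree at two non-infinity positions, the
parameters coincide. -/
lemma agree (hq : q = 3 * s + 1) (hA : Fintype.card A ≤ 3 * s)
    (ψ : B → A) (hψ : Function.Injective ψ)
    (φ : A → ZMod 3) (hφ : ∀ x b, φ (x + ψ b) = φ x)
    (a : I → Fin 4 → A)
    (H : ∀ i i' : I, ∀ j₁ j₂ j₁' j₂' : Fin 4, j₁ ≠ j₂ → j₁' ≠ j₂' →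
      z5 j₂ - z5 j₁ = z5 j₂' - z5 j₁' →
      a i j₂ - a i j₁ = a i' j₂' - a i' j₁' →
      φ (a i j₁) = φ (a i' j₁') →
      i = i' ∧ j₁ = j₁' ∧ j₂ = j₂')
    {ρ ρ' : ZMod 5} {τ τ' : B} {i i' : I} {p₁ p₂ : Fin 5} (hp : p₁ ≠ p₂)
    (h1 : word hq hA ψ a ρ τ i p₁ = word hq hA ψ a ρ' τ' i' p₁)
    (h2 : word hq hA ψ a ρ τ i p₂ = word hq hA ψ a ρ' τ' i' p₂)
    (n1 : word hq hA ψ a ρ τ i p₁ ≠ inf hq)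
    (n2 : word hq hA ψ a ρ τ i p₂ ≠ inf hq) :
    ρ = ρ' ∧ τ = τ' ∧ i = i' := by
  have e1 : e5 p₁ ≠ ρ := fun h => n1 ((word_eq_inf_iff hq hA ψ a ρ τ i p₁).mpr h)
  have e2 : e5 p₂ ≠ ρ := fun h => n2 ((word_eq_inf_iff hq hA ψ a ρ τ i p₂).mpr h)
  have e1' : e5 p₁ ≠ ρ' := fun h => n1 (h1 ▸ (word_eq_inf_iff hq hA ψ a ρ' τ' i' p₁).mpr h)
  have e2' : e5 p₂ ≠ ρ' := fun h => n2 (h2 ▸ (word_eq_inf_iff hq hA ψ a ρ' τ' i' p₂).mpr h)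
  rw [word_apply hq hA ψ a ρ τ i p₁ e1, word_apply hq hA ψ a ρ' τ' i' p₁ e1'] at h1
  rw [word_apply hq hA ψ a ρ τ i p₂ e2, word_apply hq hA ψ a ρ' τ' i' p₂ e2'] at h2
  have v1 := emb_inj hq hA h1
  have v2 := emb_inj hq hA h2
  set j₁ := slotIdx p₁ ρ e1 with hj₁
  set j₂ := slotIdx p₂ ρ e2 with hj₂
  set j₁' := slotIdx p₁ ρ' e1' with hj₁'
  set j₂' := slotIdx p₂ ρ' e2' with hj₂'
  have hz1 : z5 j₁ = e5 p₁ - ρ := z5_slotIdx p₁ ρ e1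
  have hz2 : z5 j₂ = e5 p₂ - ρ := z5_slotIdx p₂ ρ e2
  have hz1' : z5 j₁' = e5 p₁ - ρ' := z5_slotIdx p₁ ρ' e1'
  have hz2' : z5 j₂' = e5 p₂ - ρ' := z5_slotIdx p₂ ρ' e2'
  have hjne : j₁ ≠ j₂ := by
    intro h
    apply hp
    apply e5_inj
    have := congrArg z5 h
    rw [hz1, hz2] at this
    exact sub_left_injective this
  have hjne' : j₁' ≠ j₂' := by
    intro h
    apply hp
    apply e5_inj
    have := congrArg z5 h
    rw [hz1', hz2'] at this
    exact sub_left_injective this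
  have hδ : z5 j₂ - z5 j₁ = z5 j₂' - z5 j₁' := by
    rw [hz1, hz2, hz1', hz2', sub_sub_sub_cancel_right, sub_sub_sub_cancel_right]
  have hd : a i j₂ - a i j₁ = a i' j₂' - a i' j₁' := by
    have := congrArg₂ (fun x y => x - y) v2 v1
    simpa using this
  have hc : φ (a i j₁) = φ (a i' j₁') := by
    have := congrArg φ v1
    rwa [hφ, hφ] at this
  obtain ⟨hi, hj1, hj2⟩ := H i i' j₁ j₂ j₁' j₂' hjne hjne' hδ hd hc
  have hρ : ρ = ρ' := by
    have : e5 p₁ - ρ = e5 p₁ - ρ' := by rw [← hz1, ← hz1', hj1]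
    exact sub_right_injective this
  refine ⟨hρ, ?_, hi⟩
  rw [hi, hj1] at v1
  exact hψ (add_left_cancel v1)

variable (hq : q = 3 * s + 1) (hA : Fintype.card A ≤ 3 * s)
  (ψ : B → A) (a : I → Fin 4 → A)

/-- the all-infinity word -/
noncomputable def infWord (hq : q = 3 * s + 1) : Fin 5 → Fin q := fun _ => inf hq

/-- the code -/
noncomputable def code : Set (Fin 5 → Fin q) :=
  insert (infWord hq) (Set.range (fun x : ZMod 5 × B × I => word hq hA ψ a x.1 x.2.1 x.2.2))

lemma word_ne_infWord (ρ : ZMod 5) (τ : B) (i : I) :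
    word hq hA ψ a ρ τ i ≠ infWord hq := by
  intro h
  have h2 : e5 (d5 (ρ + 1)) ≠ ρ := by
    rw [e5_d5]
    intro h3
    have h4 : ρ + 1 = ρ + 0 := by simpa using h3
    exact (by decide : (1 : ZMod 5) ≠ 0) (add_left_cancel h4)
  have := congrFun h (d5 (ρ + 1))
  rw [word_apply hq hA ψ a ρ τ i _ h2] at this
  exact emb_ne_inf hq hA _ this

section WithH

variable (hψ : Function.Injective ψ) (φ : A → ZMod 3) (hφ : ∀ x b, φ (x + ψ b) = φ x)
  (H : ∀ i i' : I, ∀ j₁ j₂ j₁' j₂' : Fin 4, j₁ ≠ j₂ → j₁' ≠ j₂' →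
      z5 j₂ - z5 j₁ = z5 j₂' - z5 j₁' →
      a i j₂ - a i j₁ = a i' j₂' - a i' j₁' →
      φ (a i j₁) = φ (a i' j₁') →
      i = i' ∧ j₁ = j₁' ∧ j₂ = j₂')

include hψ hφ H in
lemma word_family_inj :
    Function.Injective (fun x : ZMod 5 × B × I => word hq hA ψ a x.1 x.2.1 x.2.2) := by
  rintro ⟨ρ, τ, i⟩ ⟨ρ', τ', i'⟩ h
  simp only at h
  -- infinity positions agree
  have hρ : ρ = ρ' := by
    have h1 : word hq hA ψ a ρ τ i (d5 ρ) = inf hq :=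
      (word_eq_inf_iff hq hA ψ a ρ τ i (d5 ρ)).mpr (e5_d5 ρ)
    rw [h] at h1
    have h5 := (word_eq_inf_iff hq hA ψ a ρ' τ' i' (d5 ρ)).mp h1
    rw [e5_d5] at h5
    exact h5
  have hne : d5 (ρ + 1) ≠ d5 (ρ + 2) := by
    intro hcon
    have := congrArg e5 hcon
    rw [e5_d5, e5_d5] at this
    have := add_left_cancel this
    exact (by decide : (1 : ZMod 5) ≠ 2) this
  have key : ∀ z : ZMod 5, z ≠ 0 → e5 (d5 (ρ + z)) ≠ ρ := by
    intro z hz hcon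
    rw [e5_d5] at hcon
    apply hz
    have : ρ + z = ρ + 0 := by simpa using hcon
    exact add_left_cancel this
  obtain ⟨_, hτ, hi⟩ := agree hq hA ψ hψ φ hφ a H
    (ρ := ρ) (ρ' := ρ') (τ := τ) (τ' := τ') (i := i) (i' := i') hne
    (congrFun h _) (congrFun h _)
    (by
      rw [word_apply hq hA ψ a ρ τ i _ (key 1 (by decide))]
      exact emb_ne_inf hq hA _)
    (by
      rw [word_apply hq hA ψ a ρ τ i _ (key 2 (by decide))]
      exact emb_ne_inf hq hA _)
  rw [hρ, hτ, hi]

include hψ hφ H in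
theorem code_frameproof : IsFrameproof 3 (code hq hA ψ a) := by
  classical
  intro P hP hcard
  apply Set.eq_of_subset_of_subset
  swap
  · intro y hy
    exact ⟨fun i => ⟨y, hy, rfl⟩, hP hy⟩
  rintro x ⟨hxdesc, hxC⟩
  have hf : ∀ p : Fin 5, ∃ y, y ∈ P ∧ x p = y p := by
    intro p
    obtain ⟨y, hy, hxy⟩ := hxdesc p
    exact ⟨y, hy, hxy⟩
  set f : Fin 5 → (Fin 5 → Fin q) := fun p => (hf p).choose with hfdef
  have hfP : ∀ p, f p ∈ P := fun p => (hf p).choose_spec.1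
  have hfx : ∀ p, x p = (f p) p := fun p => (hf p).choose_spec.2
  rcases hxC with hxinf | ⟨⟨ρ, τ, i⟩, hw⟩
  · -- x is the all-infinity word
    by_cases hPin : infWord hq ∈ P
    · rw [hxinf]; exact hPin
    · exfalso
      have hlt : P.card < (univ : Finset (Fin 5)).card := by
        have : (univ : Finset (Fin 5)).card = 5 := by simp
        omega
      obtain ⟨p₁, -, p₂, -, hne, hfeq⟩ :=
        Finset.exists_ne_map_eq_of_card_lt_of_maps_to hlt (fun p _ => hfP p)
      rcases hP (hfP p₁) with h | ⟨⟨ρ, τ, i⟩, hw⟩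
      · exact hPin (h ▸ hfP p₁)
      · simp only at hw
        have w1 : word hq hA ψ a ρ τ i p₁ = inf hq := by
          rw [hw, ← hfx p₁, hxinf]; rfl
        have w2 : word hq hA ψ a ρ τ i p₂ = inf hq := by
          rw [hw, hfeq, ← hfx p₂, hxinf]; rfl
        have e1 := (word_eq_inf_iff hq hA ψ a ρ τ i p₁).mp w1
        have e2 := (word_eq_inf_iff hq hA ψ a ρ τ i p₂).mp w2
        exact hne (e5_inj (e1.trans e2.symm))
  · -- x is a word
    simp only at hw
    subst hw
    have hsub : ∀ p ∈ (univ.erase (d5 ρ) : Finset (Fin 5)), e5 p ≠ ρ := by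
      intro p hp hcon
      have : p = d5 ρ := e5_inj (by rw [hcon, e5_d5])
      exact (Finset.mem_erase.mp hp).1 this
    have hlt : P.card < (univ.erase (d5 ρ) : Finset (Fin 5)).card := by
      have : (univ.erase (d5 ρ) : Finset (Fin 5)).card = 4 := by
        rw [Finset.card_erase_of_mem (Finset.mem_univ _)]
        simp
      omega
    obtain ⟨p₁, hp₁, p₂, hp₂, hne, hfeq⟩ :=
      Finset.exists_ne_map_eq_of_card_lt_of_maps_to hlt (fun p _ => hfP p)
    have e1 := hsub p₁ hp₁
    have e2 := hsub p₂ hp₂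
    have n1 : word hq hA ψ a ρ τ i p₁ ≠ inf hq := by
      rw [word_apply hq hA ψ a ρ τ i p₁ e1]
      exact emb_ne_inf hq hA _
    have n2 : word hq hA ψ a ρ τ i p₂ ≠ inf hq := by
      rw [word_apply hq hA ψ a ρ τ i p₂ e2]
      exact emb_ne_inf hq hA _
    -- the common witness y is a word
    rcases hP (hfP p₁) with h | ⟨⟨ρ', τ', i'⟩, hw'⟩
    · exfalso
      apply n1
      rw [hfx p₁, h]
      rfl
    · simp only at hw'
      obtain ⟨hρ, hτ, hi⟩ := agree hq hA ψ hψ φ hφ a H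
        (ρ := ρ) (ρ' := ρ') (τ := τ) (τ' := τ') (i := i) (i' := i') hne
        (by rw [hw', ← hfx p₁])
        (by rw [hw', hfeq, ← hfx p₂])
        n1 n2
      have : word hq hA ψ a ρ τ i = f p₁ := by rw [hρ, hτ, hi, hw']
      rw [this]
      exact hfP p₁

include hψ hφ H in
theorem code_ncard (cardB : Fintype.card B = s) (cardI : Fintype.card I = 3 * s) :
    (code hq hA ψ a).ncard = 15 * s ^ 2 + 1 := by
  classical
  have hinj := word_family_inj hq hA ψ a hψ φ hφ H
  have hnotmem : infWord hq ∉
      Set.range (fun x : ZMod 5 × B × I => word hq hA ψ a x.1 x.2.1 x.2.2) := by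
    rintro ⟨⟨ρ, τ, i⟩, hw⟩
    exact word_ne_infWord hq hA ψ a ρ τ i hw
  rw [code, Set.ncard_insert_of_notMem hnotmem (Set.toFinite _)]
  have hre : Set.range (fun x : ZMod 5 × B × I => word hq hA ψ a x.1 x.2.1 x.2.2) =
      ↑(Finset.univ.image (fun x : ZMod 5 × B × I => word hq hA ψ a x.1 x.2.1 x.2.2)) := by
    simp
  rw [hre, Set.ncard_coe_finset, Finset.card_image_of_injective _ hinj, Finset.card_univ,
    Fintype.card_prod, Fintype.card_prod, ZMod.card, cardB, cardI]
  ring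

end WithH

end Skeleton


abbrev V : Type := ZMod 3 × ZMod 3
abbrev V3 : Type := ZMod 3 × ZMod 3 × ZMod 3

def TV (v : V) : V := (-v.2, v.1)
def T3 (v : V3) : V3 := (v.2.1, v.2.2, -v.1 + v.2.1)

lemma TV_inj : Function.Injective TV := by decide
lemma TV1_inj : Function.Injective (fun v : V => v + TV v) := by decide
lemma TV2_inj : Function.Injective (fun v : V => v + v + TV v) := by decide
lemma TVd_inj : Function.Injective (fun v : V => v + v) := by decide
lemma T3_inj : Function.Injective T3 := by decide
lemma T31_inj : Function.Injective (fun v : V3 => v + T3 v) := by decide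
lemma T32_inj : Function.Injective (fun v : V3 => v + v + T3 v) := by decide
lemma T3d_inj : Function.Injective (fun v : V3 => v + v) := by decide

abbrev H3 (j e : ℕ) : Type := (Fin j → V) × (Fin e → V3)

variable {j e : ℕ}

def T (h : H3 j e) : H3 j e := (fun x => TV (h.1 x), fun x => T3 (h.2 x))

lemma lift_inj {f : V → V} {g : V3 → V3} (hf : Function.Injective f)
    (hg : Function.Injective g)
    (F : H3 j e → H3 j e)
    (hF : ∀ h, F h = ((fun x => f (h.1 x)), (fun x => g (h.2 x)))) :
    Function.Injective F := by
  intro h h' heq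
  rw [hF, hF] at heq
  have e1 := congrArg Prod.fst heq
  have e2 := congrArg Prod.snd heq
  simp only at e1 e2
  refine Prod.ext ?_ ?_ <;> funext x
  · exact hf (congrFun e1 x)
  · exact hg (congrFun e2 x)

lemma T_inj : Function.Injective (T (j := j) (e := e)) :=
  lift_inj TV_inj T3_inj _ (fun h => rfl)

lemma T1_inj : Function.Injective (fun h : H3 j e => h + T h) :=
  lift_inj TV1_inj T31_inj _ (fun h => rfl)

lemma T2_inj : Function.Injective (fun h : H3 j e => h + h + T h) :=
  lift_inj TV2_inj T32_inj _ (fun h => rfl)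

lemma Td_inj : Function.Injective (fun h : H3 j e => h + h) :=
  lift_inj TVd_inj T3d_inj _ (fun h => rfl)

/-- the four block entries in the elementary abelian part -/
def G : Fin 4 → H3 j e → H3 j e := fun n h =>
  match n with
  | 0 => 0
  | 1 => h
  | 2 => h + h
  | 3 => h + h + T h

lemma Gdiff_inj (j₁ j₂ : Fin 4) (hne : j₁ ≠ j₂) :
    Function.Injective (fun h : H3 j e => G j₂ h - G j₁ h) := by
  have neg_comp : ∀ F : H3 j e → H3 j e, Function.Injective F →
      Function.Injective (fun h => -F h) := by
    intro F hF
    exact fun x y hxy => hF (neg_injective hxy)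
  fin_cases j₁ <;> fin_cases j₂ <;> simp only [G, sub_zero, zero_sub] at *
  · exact absurd rfl hne
  · exact fun x y h => by simpa using h
  · exact fun x y h => Td_inj (by simpa using h)
  · exact fun x y h => T2_inj (by simpa using h)
  · exact neg_comp _ (fun x y h => by simpa using h)
  · exact absurd rfl hne
  · intro x y h
    have h2 : x = y ∨ True := Or.inr trivial
    have : (fun h : H3 j e => (h + h) - h) = (fun h : H3 j e => h) := by
      funext h; abel
    exact (by simpa [this] using h : x = y)
  · intro x y h
    apply T1_inj
    show x + T x = y + T y
    have h2 : x + x + T x - x = y + y + T y - y := h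
    abel_nf at h2 ⊢
    exact h2
  · exact neg_comp _ Td_inj
  · intro x y h
    have : (fun h : H3 j e => h - (h + h)) = (fun h : H3 j e => -h) := by
      funext h; abel
    exact neg_injective (by simpa [this] using h)
  · exact absurd rfl hne
  · intro x y h
    have : (fun h : H3 j e => (h + h + T h) - (h + h)) = (fun h : H3 j e => T h) := by
      funext h; abel
    exact T_inj (by simpa [this] using h)
  · exact neg_comp _ T2_inj
  · intro x y h
    apply T1_inj
    apply neg_injective
    show -(x + T x) = -(y + T y)
    have h2 : x - (x + x + T x) = y - (y + y + T y) := h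
    abel_nf at h2 ⊢
    exact h2
  · intro x y h
    have : (fun h : H3 j e => (h + h) - (h + h + T h)) = (fun h : H3 j e => -T h) := by
      funext h; abel
    exact T_inj (neg_injective (by simpa [this] using h))
  · exact absurd rfl hne


section InstA

def αc : Fin 4 → ZMod 3 := fun n =>
  match n with
  | 0 => 0 | 1 => 1 | 2 => 1 | 3 => 0

def cN : Fin 4 → ℕ := fun n =>
  match n with
  | 0 => 0 | 1 => 1 | 2 => 2 | 3 => 4

lemma slot_decide : ∀ j₁ j₂ j₁' j₂' : Fin 4, j₁ ≠ j₂ → j₁' ≠ j₂' →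
    z5 j₂ - z5 j₁ = z5 j₂' - z5 j₁' → αc j₂ - αc j₁ = αc j₂' - αc j₁' →
    j₁ = j₁' ∧ j₂ = j₂' := by decide

variable {u : ℕ} [NeZero u]

lemma unit_mul_inj {d : ZMod u} (hd : IsUnit d) :
    Function.Injective (fun k : ZMod u => d * k) :=
  fun x y hxy => hd.mul_left_cancel hxy

lemma unit2 (hu2 : ¬ 2 ∣ u) : IsUnit (2 : ZMod u) := by
  have c2 : Nat.Coprime 2 u := (Nat.prime_two.coprime_iff_not_dvd).mpr hu2
  refine ⟨ZMod.unitOfCoprime 2 c2, ?_⟩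
  push_cast [ZMod.coe_unitOfCoprime]
  rfl

lemma unit3 (hu3 : ¬ 3 ∣ u) : IsUnit (3 : ZMod u) := by
  have c3 : Nat.Coprime 3 u := (Nat.prime_three.coprime_iff_not_dvd).mpr hu3
  refine ⟨ZMod.unitOfCoprime 3 c3, ?_⟩
  push_cast [ZMod.coe_unitOfCoprime]
  rfl

lemma kdiff_inj (hu2 : ¬ 2 ∣ u) (hu3 : ¬ 3 ∣ u) (j₁ j₂ : Fin 4) (hne : j₁ ≠ j₂) :
    Function.Injective (fun k : ZMod u => ((cN j₂ : ZMod u) - (cN j₁ : ZMod u)) * k) := by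
  have h1 : IsUnit (1 : ZMod u) := isUnit_one
  have h2 := unit2 hu2
  have h3 := unit3 hu3
  have h4 : IsUnit (4 : ZMod u) := by
    have h44 : (4 : ZMod u) = 2 * 2 := by norm_num
    rw [h44]
    exact h2.mul h2
  fin_cases j₁ <;> fin_cases j₂ <;>
    first
      | exact absurd rfl hne
      | (simp only [cN]
         push_cast
         norm_num
         first
           | exact fun x y hxy => hxy
           | exact unit_mul_inj h2
           | exact unit_mul_inj h3
           | exact unit_mul_inj h4
           | exact fun x y hxy => neg_injective hxy
           | exact fun x y hxy => unit_mul_inj h2 (neg_injective hxy)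
           | exact fun x y hxy => unit_mul_inj h3 (neg_injective hxy)
           | exact fun x y hxy => unit_mul_inj h4 (neg_injective hxy))

end InstA

theorem instA (q s u : ℕ) [NeZero u] (j e : ℕ)
    (hq : q = 3 * s + 1) (hu2 : ¬ 2 ∣ u) (hu3 : ¬ 3 ∣ u)
    (hs : 9 ^ j * 27 ^ e * u = s) :
    ∃ C : Set (Fin 5 → Fin q), IsFrameproof 3 C ∧ C.ncard = 15 * s ^ 2 + 1 := by
  classical
  have hcardH : Fintype.card (H3 j e) = 9 ^ j * 27 ^ e := by
    simp only [H3, Fintype.card_prod, Fintype.card_fun, ZMod.card, Fintype.card_fin]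
  have hcardB : Fintype.card (H3 j e × ZMod u) = s := by
    rw [Fintype.card_prod, hcardH, ZMod.card, hs]
  have hA : Fintype.card (ZMod 3 × H3 j e × ZMod u) ≤ 3 * s := by
    apply le_of_eq
    rw [Fintype.card_prod, Fintype.card_prod, hcardH, ZMod.card, ZMod.card, ← hs]
  have hcardI : Fintype.card (ZMod 3 × H3 j e × ZMod u) = 3 * s := by
    rw [Fintype.card_prod, Fintype.card_prod, hcardH, ZMod.card, ZMod.card, ← hs]
  set ψ : (H3 j e × ZMod u) → (ZMod 3 × H3 j e × ZMod u) := fun b => (0, b.1, b.2) with hψdef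
  set a : (ZMod 3 × H3 j e × ZMod u) → Fin 4 → (ZMod 3 × H3 j e × ZMod u) :=
    fun i n => (αc n + i.1, G n i.2.1, (cN n : ZMod u) * i.2.2) with hadef
  set φ : (ZMod 3 × H3 j e × ZMod u) → ZMod 3 := fun x => x.1 with hφdef
  have hψ : Function.Injective ψ := by
    intro b b' h
    have h2 := congrArg Prod.snd h
    simp only [hψdef] at h2
    exact Prod.ext (congrArg Prod.fst h2) (congrArg Prod.snd h2)
  have hφ : ∀ x b, φ (x + ψ b) = φ x := by
    intro x b
    simp [hφdef, hψdef]
  have H : ∀ i i' : (ZMod 3 × H3 j e × ZMod u), ∀ j₁ j₂ j₁' j₂' : Fin 4,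
      j₁ ≠ j₂ → j₁' ≠ j₂' →
      z5 j₂ - z5 j₁ = z5 j₂' - z5 j₁' →
      a i j₂ - a i j₁ = a i' j₂' - a i' j₁' →
      φ (a i j₁) = φ (a i' j₁') →
      i = i' ∧ j₁ = j₁' ∧ j₂ = j₂' := by
    rintro ⟨r, h, k⟩ ⟨r', h', k'⟩ j₁ j₂ j₁' j₂' hj hj' hδ hd hc
    have hd1 := congrArg (fun x : ZMod 3 × H3 j e × ZMod u => x.1) hd
    have hd2 := congrArg (fun x : ZMod 3 × H3 j e × ZMod u => x.2.1) hd
    have hd3 := congrArg (fun x : ZMod 3 × H3 j e × ZMod u => x.2.2) hd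
    simp only [hadef, Prod.fst_sub, Prod.snd_sub] at hd1 hd2 hd3
    have hd1' : αc j₂ - αc j₁ = αc j₂' - αc j₁' := by
      simpa [add_sub_add_right_eq_sub] using hd1
    obtain ⟨e1, e2⟩ := slot_decide j₁ j₂ j₁' j₂' hj hj' hδ hd1'
    subst e1; subst e2
    have hh : h = h' := Gdiff_inj j₁ j₂ hj hd2
    have hk : k = k' := by
      apply kdiff_inj hu2 hu3 j₁ j₂ hj
      simp only [← sub_mul] at hd3 ⊢
      exact hd3
    have hr : r = r' := by
      simp only [hφdef, hadef] at hc
      exact add_left_cancel hc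
    exact ⟨by rw [hr, hh, hk], rfl, rfl⟩
  exact ⟨code hq hA ψ a,
    code_frameproof hq hA ψ a hψ φ hφ H,
    code_ncard hq hA ψ a hψ φ hφ H hcardB hcardI⟩

section InstB

def W : Fin 9 → Fin 4 → ZMod 9 := fun b =>
  match b with
  | 0 => ![0,2,1,2]
  | 1 => ![0,8,8,5]
  | 2 => ![1,1,5,8]
  | 3 => ![2,0,5,0]
  | 4 => ![2,7,3,6]
  | 5 => ![2,3,7,1]
  | 6 => ![1,0,6,4]
  | 7 => ![0,1,3,3]
  | 8 => ![1,8,1,7]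

set_option maxHeartbeats 2000000 in
lemma gadget_inj : ∀ β β' : Fin 9, ∀ j₁ j₂ j₁' j₂' : Fin 4,
    j₁ ≠ j₂ → j₁' ≠ j₂' →
    z5 j₂ - z5 j₁ = z5 j₂' - z5 j₁' →
    W β j₂ - W β j₁ = W β' j₂' - W β' j₁' →
    ((W β j₁).val : ZMod 3) = ((W β' j₁').val : ZMod 3) →
    β = β' ∧ j₁ = j₁' ∧ j₂ = j₂' := by decide

def ψ3 : ZMod 3 → ZMod 9 := fun t => ((3 * t.val : ℕ) : ZMod 9)

lemma ψ3_inj : Function.Injective ψ3 := by decide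

def φ9 : ZMod 9 → ZMod 3 := fun w => ((w.val : ℕ) : ZMod 3)

lemma φ9_shift : ∀ x t, φ9 (x + ψ3 t) = φ9 x := by decide

end InstB

theorem instB (q s u : ℕ) [NeZero u]
    (hq : q = 3 * s + 1) (hu2 : ¬ 2 ∣ u) (hu3 : ¬ 3 ∣ u)
    (hs : 3 * u = s) :
    ∃ C : Set (Fin 5 → Fin q), IsFrameproof 3 C ∧ C.ncard = 15 * s ^ 2 + 1 := by
  classical
  have hcardB : Fintype.card (ZMod 3 × ZMod u) = s := by
    rw [Fintype.card_prod, ZMod.card, ZMod.card, hs]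
  have hA : Fintype.card (ZMod 9 × ZMod u) ≤ 3 * s := by
    apply le_of_eq
    rw [Fintype.card_prod, ZMod.card, ZMod.card, ← hs]
    ring
  have hcardI : Fintype.card (Fin 9 × ZMod u) = 3 * s := by
    rw [Fintype.card_prod, Fintype.card_fin, ZMod.card, ← hs]
    ring
  set ψ : (ZMod 3 × ZMod u) → (ZMod 9 × ZMod u) := fun b => (ψ3 b.1, b.2) with hψdef
  set a : (Fin 9 × ZMod u) → Fin 4 → (ZMod 9 × ZMod u) :=
    fun i n => (W i.1 n, (cN n : ZMod u) * i.2) with hadef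
  set φ : (ZMod 9 × ZMod u) → ZMod 3 := fun x => φ9 x.1 with hφdef
  have hψ : Function.Injective ψ := by
    intro b b' h
    simp only [hψdef] at h
    have h1 := congrArg Prod.fst h
    have h2 := congrArg Prod.snd h
    simp only [Prod.fst, Prod.snd] at h1 h2
    exact Prod.ext (ψ3_inj h1) h2
  have hφ : ∀ x b, φ (x + ψ b) = φ x := by
    intro x b
    simp only [hφdef, hψdef, Prod.fst_add]
    exact φ9_shift x.1 b.1
  have H : ∀ i i' : (Fin 9 × ZMod u), ∀ j₁ j₂ j₁' j₂' : Fin 4,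
      j₁ ≠ j₂ → j₁' ≠ j₂' →
      z5 j₂ - z5 j₁ = z5 j₂' - z5 j₁' →
      a i j₂ - a i j₁ = a i' j₂' - a i' j₁' →
      φ (a i j₁) = φ (a i' j₁') →
      i = i' ∧ j₁ = j₁' ∧ j₂ = j₂' := by
    rintro ⟨β, k⟩ ⟨β', k'⟩ j₁ j₂ j₁' j₂' hj hj' hδ hd hc
    have hd1 := congrArg (fun x : ZMod 9 × ZMod u => x.1) hd
    have hd2 := congrArg (fun x : ZMod 9 × ZMod u => x.2) hd
    simp only [hadef, Prod.fst_sub, Prod.snd_sub] at hd1 hd2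
    simp only [hφdef, hadef] at hc
    obtain ⟨e0, e1, e2⟩ := gadget_inj β β' j₁ j₂ j₁' j₂' hj hj' hδ hd1 hc
    subst e0; subst e1; subst e2
    have hk : k = k' := by
      apply kdiff_inj hu2 hu3 j₁ j₂ hj
      simp only [← sub_mul] at hd2 ⊢
      exact hd2
    exact ⟨by rw [hk], rfl, rfl⟩
  exact ⟨code hq hA ψ a,
    code_frameproof hq hA ψ a hψ φ hφ H,
    code_ncard hq hA ψ a hψ φ hφ H hcardB hcardI⟩

theorem main (q : ℕ) (hq : q % 6 = 4) :
    ∃ C : Set (Fin 5 → Fin q), IsFrameproof 3 C ∧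
      3 * C.ncard = 5 * (q - 1) ^ 2 + 3 := by
  classical
  have hdm := Nat.div_add_mod q 6
  set k := q / 6 with hk
  have hq6 : q = 6 * k + 4 := by omega
  set s := 2 * k + 1 with hs'
  have hqs : q = 3 * s + 1 := by omega
  set b := (3 * s).factorization 3 with hb'
  set u := (3 * s) / 3 ^ b with hu'
  have hm0 : 3 * s ≠ 0 := by omega
  have hb : 1 ≤ b :=
    Nat.Prime.factorization_pos_of_dvd Nat.prime_three hm0 ⟨s, rfl⟩
  have hbu : 3 ^ b * u = 3 * s := Nat.ordProj_mul_ordCompl_eq_self (3 * s) 3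
  have hu3 : ¬ 3 ∣ u := Nat.not_dvd_ordCompl Nat.prime_three hm0
  have hudvd : u ∣ 3 * s := Nat.ordCompl_dvd (3 * s) 3
  have hu2 : ¬ 2 ∣ u := by
    intro h2
    have : 2 ∣ 3 * s := dvd_trans h2 hudvd
    omega
  have hu0 : u ≠ 0 := by
    intro h
    rw [h, mul_zero] at hbu
    omega
  haveI : NeZero u := ⟨hu0⟩
  set n := b - 1 with hn'
  have hbn : b = n + 1 := by omega
  have key : ∀ j e : ℕ, 2 * j + 3 * e = n → 9 ^ j * 27 ^ e * u = s := by
    intro j e hje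
    have h9 : (9 : ℕ) ^ j = 3 ^ (2 * j) := by
      rw [pow_mul]
      norm_num
    have h27 : (27 : ℕ) ^ e = 3 ^ (3 * e) := by
      rw [pow_mul]
      norm_num
    have hcalc : (9 : ℕ) ^ j * 27 ^ e * u = 3 ^ n * u := by
      rw [h9, h27, ← pow_add, hje]
    rw [hcalc]
    have h3 : 3 * (3 ^ n * u) = 3 * s := by
      rw [← hbu, hbn]
      ring
    exact Nat.eq_of_mul_eq_mul_left (by norm_num) h3
  have main' : ∃ C : Set (Fin 5 → Fin q), IsFrameproof 3 C ∧
      C.ncard = 15 * s ^ 2 + 1 := by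
    by_cases hb2 : b = 2
    · apply instB q s u hqs hu2 hu3
      have h9 : (3:ℕ) ^ b = 9 := by rw [hb2]; norm_num
      rw [h9] at hbu
      omega
    · have hn1 : n ≠ 1 := by omega
      rcases Nat.even_or_odd n with he | ho
      · obtain ⟨j, hj⟩ := he
        exact instA q s u j 0 hqs hu2 hu3 (key j 0 (by omega))
      · obtain ⟨j, hj⟩ := ho
        have hj1 : 1 ≤ j := by omega
        exact instA q s u (j - 1) 1 hqs hu2 hu3 (key (j - 1) 1 (by omega))
  obtain ⟨C, hC1, hC2⟩ := main'
  refine ⟨C, hC1, ?_⟩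
  rw [hC2]
  have hq1 : q - 1 = 3 * s := by omega
  rw [hq1]
  ring

end FP5

/-- For every `q ≡ 4 (mod 6)` there is a `q`-ary 3-frameproof code of length 5
with cardinality `(5/3)(q-1)^2 + 1` (stated multiplied through by 3). -/
theorem exists_frameproof_c3_l5 (q : ℕ) (hq : q % 6 = 4) :
    ∃ C : Set (Fin 5 → Fin q), IsFrameproof 3 C ∧
      3 * C.ncard = 5 * (q - 1) ^ 2 + 3 :=
  FP5.main q hq
end

section
/- Let m be a prime power, and l, s, t positive integers with m ≥ l-1 and 2t-1 ≤ l; set q = (s-1)m+1. If an orthogonal array OA(t,l,s) of index 1 exists, then there exists a q-ary c-frameproof code of length l with cardinality ((s^t - 1)/(s-1)^t)(q-1)^t, where c ≥ t is any integer such that l = c(t-1)+r for some r with t ≤ r ≤ c. -/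
open Finset

section Aux

/-- A code with property P(t) is `c`-frameproof when `l = c(t-1)+r`, `t ≤ r`. -/
lemma isFrameproof_of_propertyP {l t c r : ℕ} {S : Type*} [DecidableEq S]
    (ht : 0 < t) (hl : l = c * (t - 1) + r) (hr1 : t ≤ r)
    {inf : S} {C : Set (Fin l → S)} (hP : PropertyP t inf C) :
    IsFrameproof c C := by
  intro P hPC hPc
  apply Set.Subset.antisymm
  · rintro x ⟨hxd, hxC⟩
    by_contra hxP
    have hinf := hP.1 x hxC
    have hag : ∀ y ∈ P,
        (Finset.univ.filter fun i => x i = y i ∧ x i ≠ inf).card ≤ t - 1 := by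
      intro y hy
      by_contra hcard
      push_neg at hcard
      have hxy := hP.2 x hxC y (hPC hy)
        (Finset.univ.filter fun i => x i = y i ∧ x i ≠ inf) (by omega)
        (fun i hi => (Finset.mem_filter.mp hi).2)
      exact hxP (by rw [hxy]; exact hy)
    have hcover : (Finset.univ : Finset (Fin l)) ⊆
        (Finset.univ.filter fun i => x i = inf) ∪
          P.biUnion (fun y => Finset.univ.filter fun i => x i = y i ∧ x i ≠ inf) := by
      intro i _
      by_cases hi : x i = inf
      · exact Finset.mem_union_left _ (Finset.mem_filter.mpr ⟨Finset.mem_univ _, hi⟩)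
      · obtain ⟨y, hy, hxy⟩ := hxd i
        exact Finset.mem_union_right _ (Finset.mem_biUnion.mpr
          ⟨y, hy, Finset.mem_filter.mpr ⟨Finset.mem_univ _, hxy, hi⟩⟩)
    have hbu : (P.biUnion fun y =>
        Finset.univ.filter fun i => x i = y i ∧ x i ≠ inf).card ≤ c * (t - 1) := by
      refine le_trans Finset.card_biUnion_le (le_trans (Finset.sum_le_sum hag) ?_)
      rw [Finset.sum_const, smul_eq_mul]
      exact Nat.mul_le_mul_right _ hPc
    have h1 := Finset.card_le_card hcover
    have h2 := Finset.card_union_le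
      (Finset.univ.filter fun i => x i = inf)
      (P.biUnion fun y => Finset.univ.filter fun i => x i = y i ∧ x i ≠ inf)
    have h3 : (Finset.univ : Finset (Fin l)).card = l := by simp
    have h4 : l ≤ (t - 1) + c * (t - 1) := by
      calc l = (Finset.univ : Finset (Fin l)).card := h3.symm
        _ ≤ _ := h1
        _ ≤ _ := h2
        _ ≤ (t - 1) + c * (t - 1) := Nat.add_le_add hinf hbu
    clear h1 h2 h3 hcover hbu hag hinf hxd hxC hxP hPC hPc
    omega
  · intro y hy
    refine Set.mem_inter ?_ (hPC hy)
    intro i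
    exact ⟨y, hy, rfl⟩

/-- Two columns of an OA of strength `t` agreeing in at least `t` rows are equal. -/
lemma OA_col_eq {l N s t : ℕ} {A : Fin l → Fin N → Fin s} (hOA : IsOA t A)
    {j j' : Fin N} (I : Finset (Fin l)) (hI : t ≤ I.card)
    (hag : ∀ i ∈ I, A i j = A i j') : j = j' := by
  obtain ⟨J, hJI, hJ⟩ := Finset.exists_subset_card_eq hI
  obtain ⟨j1, _, huniq⟩ := hOA (fun k => J.orderEmbOfFin hJ k)
    (fun a b hab => (J.orderEmbOfFin hJ).injective hab)
    (fun k => A (J.orderEmbOfFin hJ k) j)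
  have h1 : j = j1 := huniq j (fun k => rfl)
  have h2 : j' = j1 := huniq j' (fun k =>
    (hag _ (hJI (J.orderEmbOfFin_mem hJ k))).symm)
  rw [h1, h2]

variable {F : Type*} [Field F] [DecidableEq F]

/-- The polynomial with coefficient vector `f`. -/
noncomputable def polyOf {t : ℕ} (f : Fin t → F) : Polynomial F :=
  ∑ k : Fin t, Polynomial.C (f k) * Polynomial.X ^ (k : ℕ)

lemma coeff_polyOf {t : ℕ} (f : Fin t → F) (j : ℕ) :
    (polyOf f).coeff j = if h : j < t then f ⟨j, h⟩ else 0 := by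
  rw [polyOf, Polynomial.finset_sum_coeff]
  simp only [Polynomial.coeff_C_mul, Polynomial.coeff_X_pow, mul_ite, mul_one, mul_zero]
  by_cases h : j < t
  · rw [dif_pos h, Finset.sum_eq_single (⟨j, h⟩ : Fin t)]
    · simp
    · intro k _ hk
      rw [if_neg]
      intro hj
      exact hk (Fin.ext hj.symm)
    · simp
  · rw [dif_neg h]
    refine Finset.sum_eq_zero fun k _ => ?_
    rw [if_neg]
    intro hj
    exact h (hj ▸ k.isLt)

lemma eval_polyOf {t : ℕ} (f : Fin t → F) (x : F) :
    (polyOf f).eval x = ∑ k : Fin t, f k * x ^ (k : ℕ) := by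
  simp [polyOf, Polynomial.eval_finset_sum]

/-- Evaluation of a degree `< t` coefficient vector at the `i`-th point
(the last point being the point at infinity). -/
def evalPt {l t : ℕ} (ht : 0 < t) (pt : Fin (l - 1) → F) (i : Fin l)
    (f : Fin t → F) : F :=
  if h : (i : ℕ) < l - 1 then ∑ k : Fin t, f k * pt ⟨i, h⟩ ^ (k : ℕ)
  else f ⟨t - 1, by omega⟩

lemma evalPt_sub {l t : ℕ} (ht : 0 < t) (pt : Fin (l - 1) → F) (i : Fin l)
    (f g : Fin t → F) :
    evalPt ht pt i (f - g) = evalPt ht pt i f - evalPt ht pt i g := by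
  unfold evalPt
  split
  · rw [← Finset.sum_sub_distrib]
    exact Finset.sum_congr rfl fun k _ => by simp [sub_mul]
  · simp

/-- A nonzero coefficient vector evaluates to zero in at most `t-1` points. -/
lemma card_zeros {l t : ℕ} (ht : 0 < t) (hl0 : 0 < l) (pt : Fin (l - 1) → F)
    (hpt : Function.Injective pt) {f : Fin t → F} (hf : f ≠ 0) :
    ((Finset.univ : Finset (Fin l)).filter fun i => evalPt ht pt i f = 0).card
      ≤ t - 1 := by
  classical
  have hp0 : polyOf f ≠ 0 := by
    obtain ⟨k, hk⟩ := Function.ne_iff.mp hf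
    intro h0
    have hc := coeff_polyOf f (k : ℕ)
    rw [h0, Polynomial.coeff_zero, dif_pos k.isLt] at hc
    exact hk (by rw [← Fin.eta k k.isLt, ← hc]; rfl)
  set Z := (Finset.univ : Finset (Fin l)).filter fun i => evalPt ht pt i f = 0
    with hZdef
  set R := (Finset.univ : Finset (Fin (l - 1))).filter
    fun i' => (polyOf f).eval (pt i') = 0 with hRdef
  set Za := Z.filter (fun i : Fin l => (i : ℕ) < l - 1) with hZadef
  have hRcard : R.card ≤ (polyOf f).natDegree := by
    have h1 : R.card ≤ (polyOf f).roots.toFinset.card := by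
      refine Finset.card_le_card_of_injOn pt ?_ (fun a _ b _ hab => hpt hab)
      intro i' hi'
      rw [Finset.mem_coe, Multiset.mem_toFinset, Polynomial.mem_roots']
      exact ⟨hp0, (Finset.mem_filter.mp hi').2⟩
    exact le_trans h1 (le_trans (polyOf f).roots.toFinset_card_le
      (polyOf f).card_roots')
  have hZaR : Za.card ≤ R.card := by
    have hsub : Za ⊆ R.image
        (fun i' : Fin (l - 1) => (⟨(i' : ℕ), by have := i'.isLt; omega⟩ : Fin l)) := by
      intro i hi
      obtain ⟨hiZ, hia⟩ := Finset.mem_filter.mp hi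
      refine Finset.mem_image.mpr ⟨⟨(i : ℕ), hia⟩, ?_, Fin.ext rfl⟩
      refine Finset.mem_filter.mpr ⟨Finset.mem_univ _, ?_⟩
      have hev := (Finset.mem_filter.mp hiZ).2
      rw [evalPt, dif_pos hia] at hev
      rw [eval_polyOf]
      exact hev
    exact le_trans (Finset.card_le_card hsub) Finset.card_image_le
  by_cases hd : f ⟨t - 1, by omega⟩ = 0
  · -- degree ≤ t - 2, one extra point at infinity possible
    have ht2 : 2 ≤ t := by
      rcases Nat.lt_or_ge t 2 with h | h
      · exfalso
        obtain ⟨k, hk⟩ := Function.ne_iff.mp hf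
        have hkk : k = ⟨t - 1, by omega⟩ :=
          Fin.ext (show (k : ℕ) = t - 1 by have := k.isLt; omega)
        exact hk (hkk ▸ hd)
      · exact h
    have hdeg : (polyOf f).natDegree ≤ t - 2 := by
      rw [Polynomial.natDegree_le_iff_coeff_eq_zero]
      intro N hN
      rw [coeff_polyOf]
      by_cases hNt : N < t
      · rw [dif_pos hNt]
        have hNe : (⟨N, hNt⟩ : Fin t) = ⟨t - 1, by omega⟩ :=
          Fin.ext (show N = t - 1 by omega)
        rw [hNe]; exact hd
      · rw [dif_neg hNt]
    have hZsub : Z ⊆ Za ∪ ({(⟨l - 1, by omega⟩ : Fin l)} : Finset (Fin l)) := by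
      intro i hi
      by_cases hia : (i : ℕ) < l - 1
      · exact Finset.mem_union_left _ (Finset.mem_filter.mpr ⟨hi, hia⟩)
      · refine Finset.mem_union_right _ (Finset.mem_singleton.mpr ?_)
        exact Fin.ext (show (i : ℕ) = l - 1 by have := i.isLt; omega)
    have h1 := Finset.card_le_card hZsub
    have h2 := Finset.card_union_le Za
      ({(⟨l - 1, by omega⟩ : Fin l)} : Finset (Fin l))
    have h3 : ({(⟨l - 1, by omega⟩ : Fin l)} : Finset (Fin l)).card = 1 :=
      Finset.card_singleton _
    omega
  · -- leading coefficient nonzero: infinity is not a zero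
    have hdeg : (polyOf f).natDegree ≤ t - 1 := by
      rw [Polynomial.natDegree_le_iff_coeff_eq_zero]
      intro N hN
      rw [coeff_polyOf, dif_neg (by omega)]
    have hZZa : Z = Za := by
      apply Finset.Subset.antisymm
      · intro i hi
        refine Finset.mem_filter.mpr ⟨hi, ?_⟩
        by_contra hia
        have hev := (Finset.mem_filter.mp hi).2
        rw [evalPt, dif_neg hia] at hev
        exact hd hev
      · exact Finset.filter_subset _ _
    rw [hZZa]
    omega

end Aux

/-- From an `OA(t,l,s)` of index 1 and a prime power `m ≥ l - 1`, there is a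
`q`-ary `c`-frameproof code of length `l` of cardinality
`((s^t - 1)/(s-1)^t)(q-1)^t = (s^t - 1) * m^t`, where `q = (s-1)m + 1`. -/
theorem frameproof_from_OA {l s t c r m : ℕ}
    (hm : ∃ p k : ℕ, p.Prime ∧ 0 < k ∧ m = p ^ k)
    (hml : l - 1 ≤ m) (hlt : 2 * t - 1 ≤ l) (htc : t ≤ c)
    (hl : l = c * (t - 1) + r) (hr1 : t ≤ r) (hr2 : r ≤ c)
    (hOA : ∃ A : Fin l → Fin (s ^ t) → Fin s, IsOA t A) :
    ∃ C : Set (Fin l → Fin ((s - 1) * m + 1)),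
      IsFrameproof c C ∧ C.ncard = (s ^ t - 1) * m ^ t := by
  obtain ⟨A, hA⟩ := hOA
  by_cases htriv : t = 0 ∨ s ≤ 1
  · refine ⟨∅, ?_, ?_⟩
    · intro P hP _
      have hP0 : P = ∅ :=
        Finset.coe_eq_empty.mp (Set.subset_empty_iff.mp hP)
      subst hP0
      simp
    · rw [Set.ncard_empty]
      rcases htriv with h | h
      · subst h; simp
      · have : s ^ t ≤ 1 := le_trans (Nat.pow_le_pow_left h t) (by simp)
        have : s ^ t - 1 = 0 := by omega
        rw [this, Nat.zero_mul]
  · push_neg at htriv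
    obtain ⟨ht0, hs2⟩ := htriv
    have ht : 0 < t := Nat.pos_of_ne_zero ht0
    have hl0 : 0 < l := by omega
    obtain ⟨p, k, hp, hk, hmpk⟩ := hm
    haveI : Fact p.Prime := ⟨hp⟩
    set F := GaloisField p k with hF
    haveI : DecidableEq F := Classical.decEq F
    haveI : Fintype F := Fintype.ofFinite F
    have hcardF : Fintype.card F = m := by
      rw [← Nat.card_eq_fintype_card, GaloisField.card p k (by omega), hmpk]
    obtain ⟨pt⟩ : Nonempty (Fin (l - 1) ↪ F) :=
      Function.Embedding.nonempty_of_card_le (by simp [hcardF, hml])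
    have hst : 0 < s ^ t := Nat.pow_pos (by omega)
    set j0 : Fin (s ^ t) := ⟨0, hst⟩ with hj0
    have hdel : ∀ a b : Fin s, a ≠ b →
        (if (a : ℕ) < (b : ℕ) then (a : ℕ) else (a : ℕ) - 1) < s - 1 := by
      intro a b hab
      have ha := a.isLt
      have hb := b.isLt
      have hne : (a : ℕ) ≠ (b : ℕ) := fun h => hab (Fin.ext h)
      split <;> omega
    set w : ({j : Fin (s ^ t) // j ≠ j0} × (Fin t → F)) → Fin l →
        Option (Fin (s - 1) × F) := fun d i =>
      if h : A i d.1.1 = A i j0 then none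
      else some (⟨if (A i d.1.1 : ℕ) < (A i j0 : ℕ) then (A i d.1.1 : ℕ)
          else (A i d.1.1 : ℕ) - 1, hdel _ _ h⟩, evalPt ht pt.toFun i d.2)
      with hw
    have hsym : Fintype.card (Option (Fin (s - 1) × F)) = (s - 1) * m + 1 := by
      simp [hcardF]
    set e : Option (Fin (s - 1) × F) ≃ Fin ((s - 1) * m + 1) :=
      Fintype.equivFinOfCardEq hsym with he
    set W : ({j : Fin (s ^ t) // j ≠ j0} × (Fin t → F)) → Fin l →
        Fin ((s - 1) * m + 1) := fun d i => e (w d i) with hW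
    -- basic decoding facts
    have hnone : ∀ d i, w d i = none ↔ A i d.1.1 = A i j0 := by
      intro d i
      by_cases h : A i d.1.1 = A i j0 <;> simp [hw, h]
    have hdecode : ∀ d d' i, w d i = w d' i → w d i ≠ none →
        A i d.1.1 = A i d'.1.1 ∧ evalPt ht pt.toFun i d.2 = evalPt ht pt.toFun i d'.2 := by
      intro d d' i heq hne
      have h1 : ¬ A i d.1.1 = A i j0 := fun h => hne ((hnone d i).mpr h)
      have h2 : ¬ A i d'.1.1 = A i j0 := fun h => by
        rw [heq] at hne
        exact hne ((hnone d' i).mpr h)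
      rw [hw] at heq
      simp only [dif_neg h1, dif_neg h2, Option.some.injEq, Prod.mk.injEq] at heq
      obtain ⟨hfst, hsnd⟩ := heq
      refine ⟨?_, hsnd⟩
      have hv := congrArg Fin.val hfst
      simp only [] at hv
      have ha := (A i d.1.1).isLt
      have hb := (A i d'.1.1).isLt
      have hn1 : (A i d.1.1 : ℕ) ≠ (A i j0 : ℕ) := fun h => h1 (Fin.ext h)
      have hn2 : (A i d'.1.1 : ℕ) ≠ (A i j0 : ℕ) := fun h => h2 (Fin.ext h)
      apply Fin.ext
      split at hv <;> split at hv <;> omega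
    have hcol : ∀ j j' : Fin (s ^ t), j ≠ j' →
        ((Finset.univ : Finset (Fin l)).filter fun i => A i j = A i j').card ≤ t - 1 := by
      intro j j' hjj
      by_contra hc
      push_neg at hc
      exact hjj (OA_col_eq hA
        ((Finset.univ : Finset (Fin l)).filter fun i => A i j = A i j')
        (by omega) (fun i hi => (Finset.mem_filter.mp hi).2))
    have heval : ∀ f f' : Fin t → F, f ≠ f' →
        ((Finset.univ : Finset (Fin l)).filter
          fun i => evalPt ht pt.toFun i f = evalPt ht pt.toFun i f').card ≤ t - 1 := by
      intro f f' hff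
      refine le_trans (Finset.card_le_card ?_)
        (card_zeros ht hl0 pt.toFun pt.injective (sub_ne_zero.mpr hff))
      intro i hi
      rw [Finset.mem_filter] at hi ⊢
      refine ⟨hi.1, ?_⟩
      rw [evalPt_sub, hi.2, sub_self]
    have hcardu : (Finset.univ : Finset (Fin l)).card = l := by simp
    have htl : t ≤ l := by omega
    have hWinj : Function.Injective W := by
      intro d d' hWeq
      have hweq : ∀ i, w d i = w d' i := fun i => e.injective (congrFun hWeq i)
      have hcols : d.1 = d'.1 := by
        by_contra hne
        have hjj : d.1.1 ≠ d'.1.1 := fun h => hne (Subtype.ext h)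
        refine hjj (OA_col_eq hA Finset.univ (by omega) (fun i _ => ?_))
        by_cases hn : w d i = none
        · have hx1 := (hnone d i).mp hn
          have hx2 := (hnone d' i).mp (hweq i ▸ hn)
          rw [hx1, hx2]
        · exact (hdecode d d' i (hweq i) hn).1
      have hfs : d.2 = d'.2 := by
        by_contra hff
        have hsub : (Finset.univ : Finset (Fin l)) ⊆
            (Finset.univ.filter fun i => A i d.1.1 = A i j0) ∪
            (Finset.univ.filter
              fun i => evalPt ht pt.toFun i d.2 = evalPt ht pt.toFun i d'.2) := by
          intro i _
          by_cases hn : w d i = none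
          · exact Finset.mem_union_left _
              (Finset.mem_filter.mpr ⟨Finset.mem_univ _, (hnone d i).mp hn⟩)
          · exact Finset.mem_union_right _
              (Finset.mem_filter.mpr ⟨Finset.mem_univ _, (hdecode d d' i (hweq i) hn).2⟩)
        have hb1 := hcol d.1.1 j0 d.1.2
        have hb2 := heval d.2 d'.2 hff
        have hc1 := Finset.card_le_card hsub
        have hc2 := Finset.card_union_le
          (Finset.univ.filter fun i => A i d.1.1 = A i j0)
          (Finset.univ.filter
            fun i => evalPt ht pt.toFun i d.2 = evalPt ht pt.toFun i d'.2)
        have hfin : l ≤ (t - 1) + (t - 1) := by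
          calc l = (Finset.univ : Finset (Fin l)).card := hcardu.symm
            _ ≤ _ := hc1
            _ ≤ _ := hc2
            _ ≤ (t - 1) + (t - 1) := Nat.add_le_add hb1 hb2
        clear hc1 hc2 hsub hb1 hb2 hweq hWeq
        omega
      exact Prod.ext hcols hfs
    have hProp : PropertyP t (e none) (Set.range W) := by
      constructor
      · rintro x ⟨d, rfl⟩
        have hfe : (Finset.univ.filter fun i => W d i = e none) =
            Finset.univ.filter fun i => A i d.1.1 = A i j0 := by
          refine Finset.filter_congr fun i _ => ?_
          rw [hW]
          simp only []
          constructor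
          · intro h
            exact (hnone d i).mp (e.injective h)
          · intro h
            rw [(hnone d i).mpr h]
        rw [hfe]
        exact hcol d.1.1 j0 d.1.2
      · rintro x ⟨d, rfl⟩ y ⟨d', rfl⟩ I hI hmatch
        have hww : ∀ i ∈ I, w d i = w d' i ∧ w d i ≠ none := by
          intro i hi
          obtain ⟨h1, h2⟩ := hmatch i hi
          refine ⟨e.injective h1, fun hn => h2 ?_⟩
          rw [hW]
          simp only []
          rw [hn]
        have hcols : d.1.1 = d'.1.1 := by
          by_contra hjj
          exact hjj (OA_col_eq hA I hI
            (fun i hi => (hdecode d d' i (hww i hi).1 (hww i hi).2).1))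
        have hfs : d.2 = d'.2 := by
          by_contra hff
          have hsub : I ⊆ Finset.univ.filter
              fun i => evalPt ht pt.toFun i d.2 = evalPt ht pt.toFun i d'.2 :=
            fun i hi => Finset.mem_filter.mpr
              ⟨Finset.mem_univ _, (hdecode d d' i (hww i hi).1 (hww i hi).2).2⟩
          have hb1 := Finset.card_le_card hsub
          have hb2 := heval d.2 d'.2 hff
          omega
        rw [show d = d' from Prod.ext (Subtype.ext hcols) hfs]
    refine ⟨Set.range W, isFrameproof_of_propertyP ht hl hr1 hProp, ?_⟩
    rw [← Nat.card_coe_set_eq, Nat.card_range_of_injective hWinj,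
      Nat.card_eq_fintype_card, Fintype.card_prod]
    have hc1 : Fintype.card {j : Fin (s ^ t) // j ≠ j0} = s ^ t - 1 := by
      rw [Fintype.card_subtype_compl, Fintype.card_fin, Fintype.card_subtype_eq]
    have hc2 : Fintype.card (Fin t → F) = m ^ t := by
      rw [Fintype.card_fun, hcardF, Fintype.card_fin]
    rw [hc1, hc2]
end

section
/- Let c ≥ 2 be an integer such that c+1 is a prime power, and let m ≥ c+1 be any prime power. Then there exists a (cm+1)-ary c-frameproof code of length c+2 with cardinality ((c+2)/c)(cm+1-1)^2 = (c+2)(c)m^2. -/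
open Finset

section Aux

variable {c m : ℕ} {K L : Type} [Field K] [Field L] [DecidableEq K]

/-- The `(s,b)` codeword of the doubly extended Reed-Solomon code. -/
def uu (e : Fin (c + 2) ≃ Option K) (s b : K) (k : Fin (c + 2)) : K :=
  (e k).elim s fun x => s * x + b

lemma uu_zero (e : Fin (c + 2) ≃ Option K) (k : Fin (c + 2)) : uu e 0 0 k = 0 := by
  rcases he : e k with _ | x <;> simp [uu, he]

lemma uu_eq (e : Fin (c + 2) ≃ Option K) {s b s' b' : K} {k k' : Fin (c + 2)}
    (hkk : k ≠ k') (h1 : uu e s b k = uu e s' b' k) (h2 : uu e s b k' = uu e s' b' k') :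
    s = s' ∧ b = b' := by
  have hek : e k ≠ e k' := fun h => hkk (e.injective h)
  unfold uu at h1 h2
  rcases he : e k with _ | x <;> rcases he' : e k' with _ | x' <;>
      rw [he, he'] at hek <;> rw [he] at h1 <;> rw [he'] at h2 <;>
      simp only [Option.elim] at h1 h2
  · exact absurd rfl hek
  · refine ⟨h1, ?_⟩
    subst h1
    exact add_left_cancel (by linear_combination h2)
  · refine ⟨h2, ?_⟩
    subst h2
    exact add_left_cancel (by linear_combination h1)
  · have hxx : x ≠ x' := fun h => hek (by rw [h])
    have hs : s = s' := by
      by_contra hss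
      exact hxx (mul_left_cancel₀ (sub_ne_zero.2 hss) (by ring_nf; linear_combination h1 - h2))
    subst hs
    exact ⟨rfl, by linear_combination h1⟩

lemma uu_zero_unique (e : Fin (c + 2) ≃ Option K) {s b : K} (hsb : ¬(s = 0 ∧ b = 0))
    {k k' : Fin (c + 2)} (hk : uu e s b k = 0) (hk' : uu e s b k' = 0) : k = k' := by
  by_contra h
  exact hsb (uu_eq e h (by rw [hk, uu_zero]) (by rw [hk', uu_zero]))

/-- Field-element labels for the coordinates, injective on the support of `uu e s b`. -/
def psi (e : Fin (c + 2) ≃ Option K) (φ : K ↪ L) (s b : K) (k : Fin (c + 2)) : L :=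
  φ ((e k).elim (-b / s) id)

lemma psi_ne (e : Fin (c + 2) ≃ Option K) (φ : K ↪ L) {s b : K} {k k' : Fin (c + 2)}
    (hkk : k ≠ k') (h1 : uu e s b k ≠ 0) (h2 : uu e s b k' ≠ 0) :
    psi e φ s b k ≠ psi e φ s b k' := by
  have hek : e k ≠ e k' := fun h => hkk (e.injective h)
  unfold uu at h1 h2
  unfold psi
  intro hone
  have := φ.injective hone
  rcases he : e k with _ | x <;> rcases he' : e k' with _ | x' <;>
      rw [he, he'] at hek <;> rw [he] at h1 this <;> rw [he'] at h2 this <;>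
      simp only [Option.elim, id] at h1 h2 this
  · exact hek rfl
  · apply h2
    rw [← this, mul_comm, div_mul_cancel₀ _ h1]
    ring
  · apply h1
    rw [this, mul_comm, div_mul_cancel₀ _ h2]
    ring
  · exact hek (by rw [this])

/-- The codeword map. -/
noncomputable def Wd (e : Fin (c + 2) ≃ Option K) (φ : K ↪ L)
    (g : Option ({u : K // u ≠ 0} × L) ≃ Fin (c * m + 1))
    (a : {sb : K × K // ¬(sb.1 = 0 ∧ sb.2 = 0)} × (L × L)) (k : Fin (c + 2)) :
    Fin (c * m + 1) :=
  if h : uu e a.1.1.1 a.1.1.2 k = 0 then g none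
  else g (some (⟨_, h⟩, a.2.1 * psi e φ a.1.1.1 a.1.1.2 k + a.2.2))

lemma Wd_agree (e : Fin (c + 2) ≃ Option K) (φ : K ↪ L)
    (g : Option ({u : K // u ≠ 0} × L) ≃ Fin (c * m + 1))
    {a a' : {sb : K × K // ¬(sb.1 = 0 ∧ sb.2 = 0)} × (L × L)} {k k' : Fin (c + 2)}
    (hkk : k ≠ k') (hk : uu e a.1.1.1 a.1.1.2 k ≠ 0) (hk' : uu e a.1.1.1 a.1.1.2 k' ≠ 0)
    (h1 : Wd e φ g a k = Wd e φ g a' k) (h2 : Wd e φ g a k' = Wd e φ g a' k') :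
    a = a' := by
  unfold Wd at h1 h2
  rw [dif_neg hk] at h1
  rw [dif_neg hk'] at h2
  by_cases hk2 : uu e a'.1.1.1 a'.1.1.2 k = 0
  · rw [dif_pos hk2] at h1
    exact absurd (g.injective h1) (by simp)
  by_cases hk2' : uu e a'.1.1.1 a'.1.1.2 k' = 0
  · rw [dif_pos hk2'] at h2
    exact absurd (g.injective h2) (by simp)
  rw [dif_neg hk2] at h1
  rw [dif_neg hk2'] at h2
  have h1' := g.injective h1
  have h2' := g.injective h2
  simp only [Option.some.injEq, Prod.mk.injEq, Subtype.mk.injEq] at h1' h2'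
  obtain ⟨hsb1, hL1⟩ := h1'
  obtain ⟨hsb2, hL2⟩ := h2'
  obtain ⟨hs, hb⟩ := uu_eq e hkk hsb1 hsb2
  have hsb : a.1 = a'.1 := Subtype.ext (Prod.ext hs hb)
  rw [← hsb] at hL1 hL2
  have hpsi := psi_ne e φ (L := L) hkk hk hk'
  have hd : a.2.1 = a'.2.1 := by
    by_contra hdd
    exact hpsi (mul_left_cancel₀ (sub_ne_zero.2 hdd)
      (by ring_nf; linear_combination hL1 - hL2))
  have he2 : a.2.2 = a'.2.2 := by
    rw [hd] at hL1
    exact add_left_cancel (by linear_combination hL1)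
  exact Prod.ext hsb (Prod.ext hd he2)

lemma Wd_exists_two (hc : 2 ≤ c) (e : Fin (c + 2) ≃ Option K)
    (a : {sb : K × K // ¬(sb.1 = 0 ∧ sb.2 = 0)}) :
    ∃ k k' : Fin (c + 2), k ≠ k' ∧ uu e a.1.1 a.1.2 k ≠ 0 ∧ uu e a.1.1 a.1.2 k' ≠ 0 := by
  have h0 : (0 : ℕ) < c + 2 := by omega
  have h1 : (1 : ℕ) < c + 2 := by omega
  have h2 : (2 : ℕ) < c + 2 := by omega
  set k0 : Fin (c + 2) := ⟨0, h0⟩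
  set k1 : Fin (c + 2) := ⟨1, h1⟩
  set k2 : Fin (c + 2) := ⟨2, h2⟩
  have h01 : k0 ≠ k1 := by simp [k0, k1, Fin.ext_iff]
  have h02 : k0 ≠ k2 := by simp [k0, k2, Fin.ext_iff]
  have h12 : k1 ≠ k2 := by simp [k1, k2, Fin.ext_iff]
  by_cases hz0 : uu e a.1.1 a.1.2 k0 = 0
  · refine ⟨k1, k2, h12, ?_, ?_⟩ <;> intro hz <;>
      [exact h01 (uu_zero_unique e a.2 hz0 hz); exact h02 (uu_zero_unique e a.2 hz0 hz)]
  by_cases hz1 : uu e a.1.1 a.1.2 k1 = 0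
  · exact ⟨k0, k2, h02, hz0, fun hz => h12 (uu_zero_unique e a.2 hz1 hz)⟩
  · exact ⟨k0, k1, h01, hz0, hz1⟩

lemma Wd_inj (hc : 2 ≤ c) (e : Fin (c + 2) ≃ Option K) (φ : K ↪ L)
    (g : Option ({u : K // u ≠ 0} × L) ≃ Fin (c * m + 1)) :
    Function.Injective (Wd e φ g) := by
  intro a a' h
  obtain ⟨k, k', hkk, hk, hk'⟩ := Wd_exists_two hc e a.1
  exact Wd_agree e φ g hkk hk hk' (congrFun h k) (congrFun h k')

lemma Wd_frameproof (hc : 2 ≤ c) (e : Fin (c + 2) ≃ Option K) (φ : K ↪ L)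
    (g : Option ({u : K // u ≠ 0} × L) ≃ Fin (c * m + 1)) :
    IsFrameproof c (Set.range (Wd e φ g)) := by
  intro P hP hPc
  apply Set.Subset.antisymm
  · rintro x ⟨hd, a, rfl⟩
    classical
    -- the set of coordinates where `uu` is nonzero has at least `c+1` elements
    set s := a.1.1.1
    set b := a.1.1.2
    have hzcard : (Finset.univ.filter fun i : Fin (c + 2) => uu e s b i = 0).card ≤ 1 := by
      apply Finset.card_le_one.2
      intro i hi j hj
      rw [Finset.mem_filter] at hi hj
      exact uu_zero_unique e a.1.2 hi.2 hj.2
    have hsplit := Finset.card_filter_add_card_filter_not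
      (s := (Finset.univ : Finset (Fin (c + 2)))) (p := fun i => uu e s b i = 0)
    have hTcard : c + 1 ≤ (Finset.univ.filter fun i : Fin (c + 2) => ¬uu e s b i = 0).card := by
      rw [Finset.card_univ, Fintype.card_fin] at hsplit
      omega
    -- pigeonhole
    have hmap : ∀ i ∈ (Finset.univ.filter fun i : Fin (c + 2) => ¬uu e s b i = 0),
        (hd i).choose ∈ P := fun i _ => (hd i).choose_spec.1
    obtain ⟨i, hi, j, hj, hij, hfij⟩ :=
      Finset.exists_ne_map_eq_of_card_lt_of_maps_to (by omega) hmap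
    rw [Finset.mem_filter] at hi hj
    set y := (hd i).choose with hy
    have hyP : y ∈ P := (hd i).choose_spec.1
    have hxi : Wd e φ g a i = y i := (hd i).choose_spec.2
    have hxj : Wd e φ g a j = y j := by
      have := (hd j).choose_spec.2
      rw [← hfij] at this
      exact this
    obtain ⟨a', ha'⟩ := hP hyP
    rw [← ha'] at hxi hxj
    have : a = a' := Wd_agree e φ g hij hi.2 hj.2 hxi hxj
    rw [this, ha']
    exact hyP
  · intro y hy
    exact ⟨fun i => ⟨y, hy, rfl⟩, hP hy⟩

end Aux

/-- If `c + 1` is a prime power and `m ≥ c + 1` is a prime power, there is a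
`(cm+1)`-ary `c`-frameproof code of length `c + 2` of cardinality
`((c+2)/c)(cm)^2 = (c+2) * c * m^2`. -/
theorem exists_frameproof_c_l_c2 (c m : ℕ) (hc : 2 ≤ c)
    (hc1 : ∃ p k : ℕ, p.Prime ∧ 0 < k ∧ c + 1 = p ^ k)
    (hm : ∃ p k : ℕ, p.Prime ∧ 0 < k ∧ m = p ^ k) (hcm : c + 1 ≤ m) :
    ∃ C : Set (Fin (c + 2) → Fin (c * m + 1)),
      IsFrameproof c C ∧ C.ncard = (c + 2) * c * m ^ 2 := by
  classical
  obtain ⟨p, k, hp, hk, hck⟩ := hc1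
  obtain ⟨q, j, hq, hj, hmj⟩ := hm
  haveI : Fact p.Prime := ⟨hp⟩
  haveI : Fact q.Prime := ⟨hq⟩
  set K := GaloisField p k with hKdef
  set L := GaloisField q j with hLdef
  haveI : Fintype K := Fintype.ofFinite K
  haveI : Fintype L := Fintype.ofFinite L
  have hK : Fintype.card K = c + 1 := by
    rw [← Nat.card_eq_fintype_card, GaloisField.card p k (by omega)]
    omega
  have hL : Fintype.card L = m := by
    rw [← Nat.card_eq_fintype_card, GaloisField.card q j (by omega)]
    omega
  have e : Fin (c + 2) ≃ Option K :=
    Fintype.equivOfCardEq (by simp [hK])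
  have hφ : Nonempty (K ↪ L) :=
    Function.Embedding.nonempty_of_card_le (by rw [hK, hL]; omega)
  obtain ⟨φ⟩ := hφ
  have hcardsub : Fintype.card {u : K // u ≠ 0} = c := by
    have := Fintype.card_subtype_compl (fun u : K => u = 0)
    rw [Fintype.card_subtype_eq, hK] at this
    simpa using this
  have g : Option ({u : K // u ≠ 0} × L) ≃ Fin (c * m + 1) :=
    Fintype.equivOfCardEq (by simp [hcardsub, hL])
  refine ⟨Set.range (Wd e φ g), Wd_frameproof hc e φ g, ?_⟩
  rw [← Nat.card_coe_set_eq, Nat.card_range_of_injective (Wd_inj hc e φ g),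
    Nat.card_eq_fintype_card]
  have hpair : Fintype.card {sb : K × K // ¬(sb.1 = 0 ∧ sb.2 = 0)} = (c + 2) * c := by
    have := Fintype.card_subtype_compl (fun sb : K × K => sb.1 = 0 ∧ sb.2 = 0)
    have h1 : Fintype.card {sb : K × K // sb.1 = 0 ∧ sb.2 = 0} = 1 := by
      refine Fintype.card_eq_one_iff.2 ⟨⟨(0, 0), rfl, rfl⟩, ?_⟩
      rintro ⟨⟨x, y⟩, hx, hy⟩
      simp only [Subtype.mk.injEq, Prod.mk.injEq]
      exact ⟨hx, hy⟩
    rw [h1, Fintype.card_prod, hK] at this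
    rw [this]
    have : (c + 1) * (c + 1) = (c + 2) * c + 1 := by ring
    omega
  rw [Fintype.card_prod, hpair, Fintype.card_prod, hL]
  ring
end

section
/- Let S be a finite set of size s containing ∞, and let A be an OA(t,l,s) of index 1 whose first column is the all-∞ vector. Then every other column of A contains at most t-1 coordinates equal to ∞, and the set of columns of A other than the all-∞ column forms an s-ary c-frameproof code of length l and cardinality s^t - 1 satisfying Property P(t), for any integer c ≥ t with l = c(t-1)+r, t ≤ r ≤ c. -/
open Finset

/-- Two columns of an index-1 OA that agree on `t` coordinates are equal. -/
lemma col_eq_of_agree {l N t : ℕ} {S : Type*} {A : Fin l → Fin N → S} (hOA : IsOA t A)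
    {j j' : Fin N} (I : Finset (Fin l)) (hI : t ≤ I.card)
    (hagree : ∀ i ∈ I, A i j = A i j') : j = j' := by
  obtain ⟨J, hJI, hJ⟩ := Finset.exists_subset_card_eq hI
  let e := J.orderIsoOfFin hJ
  have hinj : Function.Injective (fun k : Fin t => (e k : Fin l)) :=
    fun a b h => e.injective (Subtype.ext h)
  obtain ⟨j'', _, huniq⟩ := hOA _ hinj (fun k => A (e k : Fin l) j)
  have h1 := huniq j (fun k => rfl)
  have h2 := huniq j' (fun k => (hagree _ (hJI (e k).2)).symm)
  rw [h1, h2]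

/-- If the first column of an `OA(t,l,s)` of index 1 is the all-`inf` column,
then every other column has at most `t-1` coordinates equal to `inf`, and the
remaining columns form an `s`-ary `c`-frameproof code of cardinality `s^t - 1`
satisfying Property P(t). -/
theorem frameproof_OA_propertyP {l s t c r : ℕ} {S : Type*} [Fintype S]
    [DecidableEq S] (hs : Fintype.card S = s) (hs2 : 2 ≤ s) (inf : S)
    (A : Fin l → Fin (s ^ t) → S) (hOA : IsOA t A)
    (j0 : Fin (s ^ t)) (hj0 : ∀ i, A i j0 = inf)
    (htc : t ≤ c) (hl : l = c * (t - 1) + r) (hr1 : t ≤ r) (hr2 : r ≤ c) :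
    (∀ j ≠ j0, (Finset.univ.filter fun i => A i j = inf).card ≤ t - 1) ∧
    IsFrameproof c {x : Fin l → S | ∃ j ≠ j0, x = fun i => A i j} ∧
    Set.ncard {x : Fin l → S | ∃ j ≠ j0, x = fun i => A i j} = s ^ t - 1 ∧
    PropertyP t inf {x : Fin l → S | ∃ j ≠ j0, x = fun i => A i j} := by
  have htl : t ≤ l := by omega
  -- part (a): few infinities in each other column
  have hinf : ∀ j, j ≠ j0 → (Finset.univ.filter fun i => A i j = inf).card ≤ t - 1 := by
    intro j hj
    by_cases h : t ≤ (Finset.univ.filter fun i => A i j = inf).card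
    · exact absurd (col_eq_of_agree hOA _ h (fun i hi => by
        rw [hj0 i]; exact (Finset.mem_filter.mp hi).2)) hj
    · omega
  -- distinct indices give columns agreeing in at most t-1 coordinates
  have hagree : ∀ j j' : Fin (s ^ t), j ≠ j' →
      (Finset.univ.filter fun i => A i j = A i j').card ≤ t - 1 := by
    intro j j' hjj
    by_cases h : t ≤ (Finset.univ.filter fun i => A i j = A i j').card
    · exact absurd (col_eq_of_agree hOA _ h (fun i hi => (Finset.mem_filter.mp hi).2)) hjj
    · omega
  have hcolinj : Function.Injective (fun j : Fin (s ^ t) => fun i => A i j) := by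
    intro j j' h
    exact col_eq_of_agree hOA Finset.univ (by simpa using htl)
      (fun i _ => congrFun h i)
  refine ⟨hinf, ?_, ?_, ?_⟩
  · -- frameproof
    intro P hPC hPc
    ext x
    simp only [Set.mem_inter_iff, Finset.coe_sort_coe, Set.mem_setOf_eq, Finset.mem_coe]
    constructor
    · rintro ⟨hdesc, j, hj, rfl⟩
      by_contra hx
      -- t = 0 is impossible since then j = j0
      rcases Nat.eq_zero_or_pos t with ht0 | ht1
      · exact hj (col_eq_of_agree hOA ∅ (by simp [ht0]) (by simp))
      have key : ∀ y ∈ P, (Finset.univ.filter fun i => A i j = y i).card ≤ t - 1 := by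
        intro y hy
        obtain ⟨j', hj', rfl⟩ := hPC hy
        refine hagree j j' fun h => ?_
        exact hx (by rw [h]; exact hy)
      have cover : (Finset.univ : Finset (Fin l)) ⊆
          P.biUnion (fun y => Finset.univ.filter fun i => A i j = y i) := by
        intro i _
        obtain ⟨y, hy, hxy⟩ := hdesc i
        exact Finset.mem_biUnion.mpr ⟨y, by simpa using hy, by simp [hxy]⟩
      have hfin : l ≤ c * (t - 1) := by
        calc l = (Finset.univ : Finset (Fin l)).card := by simp
          _ ≤ (P.biUnion (fun y => Finset.univ.filter fun i => A i j = y i)).card :=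
              Finset.card_le_card cover
          _ ≤ ∑ y ∈ P, (Finset.univ.filter fun i => A i j = y i).card :=
              Finset.card_biUnion_le
          _ ≤ ∑ _y ∈ P, (t - 1) := Finset.sum_le_sum key
          _ = P.card * (t - 1) := by rw [Finset.sum_const, smul_eq_mul]
          _ ≤ c * (t - 1) := Nat.mul_le_mul_right _ hPc
      omega
    · intro hx
      exact ⟨fun i => ⟨x, by simpa using hx, rfl⟩, hPC hx⟩
  · -- cardinality
    have himg : {x : Fin l → S | ∃ j ≠ j0, x = fun i => A i j}
        = (fun j : Fin (s ^ t) => fun i => A i j) '' ({j0}ᶜ) := by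
      ext x
      simp [Set.mem_image, eq_comm, and_comm]
    rw [himg, Set.ncard_image_of_injective _ hcolinj]
    have : ({j0}ᶜ : Set (Fin (s ^ t))) = Set.univ \ {j0} := Set.compl_eq_univ_diff _
    rw [this, Set.ncard_diff (by simp), Set.ncard_univ, Set.ncard_singleton]
    simp [Nat.card_eq_fintype_card]
  · -- Property P(t)
    constructor
    · rintro x ⟨j, hj, rfl⟩
      exact hinf j hj
    · rintro x ⟨j, hj, rfl⟩ y ⟨j', hj', rfl⟩ I hI hIagree
      rw [col_eq_of_agree hOA I hI (fun i hi => (hIagree i hi).1)]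
end
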